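/- arXiv:1007.4365 — 2 statements merged into one kernel-verified Lean document; each statement's English description precedes it below -/
import Mathlib

section
/- Let Φ be a reduced crystallographic root system in a finite-dimensional real inner product space V, with a fixed choice of positive roots Φ⁺, and assume no irreducible component of Φ is of type G₂. Let S ⊆ Φ⁺ be a subset that is closed under subtraction of positive roots, i.e. whenever α ∈ S, β ∈ Φ⁺, and α − β ∈ Φ⁺, then α − β ∈ S. Then every positive root lying in the convex hull of S belongs to S: Φ⁺ ∩ conv(S) = S. -/
/-!
The key convexity lemma of the paper: if `Φ` is a reduced crystallographic root system
in a finite-dimensional real inner product space, with no irreducible component of type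
`G₂`, `Φ⁺` a positive system, and `S ⊆ Φ⁺` is closed under subtraction of positive
roots, then `Φ⁺ ∩ conv(S) = S`.
-/

open scoped RealInnerProductSpace

/-- `Φ` is a reduced crystallographic root system in the real inner product space `V`. -/
structure IsReducedCrystallographicRootSystem {V : Type*} [NormedAddCommGroup V]
    [InnerProductSpace ℝ V] (Φ : Set V) : Prop where
  finite : Φ.Finite
  ne_zero : ∀ α ∈ Φ, α ≠ (0 : V)
  span : Submodule.span ℝ Φ = ⊤
  /-- `Φ` is stable under the reflection in each of its elements. -/
  reflection_mem : ∀ α ∈ Φ, ∀ β ∈ Φ, β - (2 * ⟪β, α⟫ / ⟪α, α⟫) • α ∈ Φ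
  /-- crystallographic: all Cartan integers `⟨β, α∨⟩` are integers. -/
  crystallographic : ∀ α ∈ Φ, ∀ β ∈ Φ, ∃ n : ℤ, (n : ℝ) = 2 * ⟪β, α⟫ / ⟪α, α⟫
  /-- reduced: the only multiples of a root that are roots are `±` itself. -/
  reduced : ∀ α ∈ Φ, ∀ c : ℝ, c • α ∈ Φ → c = 1 ∨ c = -1

/-- `P` is a (choice of) positive system for `Φ`: the set of roots on which some linear
functional, nonvanishing on `Φ`, is positive. -/
def IsPositiveSystem {V : Type*} [NormedAddCommGroup V] [InnerProductSpace ℝ V]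
    (Φ P : Set V) : Prop :=
  P ⊆ Φ ∧ ∃ f : V →ₗ[ℝ] ℝ, (∀ α ∈ Φ, f α ≠ 0) ∧ P = {α ∈ Φ | 0 < f α}

/-- No irreducible component of `Φ` has type `G₂`.  For a reduced crystallographic root
system this holds if and only if no pair of roots has product of Cartan integers equal
to `3` (such a pair spans a `G₂` subsystem, and the only irreducible reduced
crystallographic root system containing such a pair is `G₂` itself). -/
def HasNoG2Component {V : Type*} [NormedAddCommGroup V] [InnerProductSpace ℝ V]
    (Φ : Set V) : Prop :=
  ∀ α ∈ Φ, ∀ β ∈ Φ, (2 * ⟪α, β⟫ / ⟪β, β⟫) * (2 * ⟪β, α⟫ / ⟪α, α⟫) ≠ 3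

section Aux

variable {V : Type*} [NormedAddCommGroup V] [InnerProductSpace ℝ V] {Φ : Set V}

private lemma inner_self_pos_of_mem (hΦ : IsReducedCrystallographicRootSystem Φ)
    {α : V} (hα : α ∈ Φ) : 0 < ⟪α, α⟫ := by
  rw [real_inner_self_eq_norm_sq]
  exact pow_pos (norm_pos_iff.mpr (hΦ.ne_zero α hα)) 2

private lemma neg_mem_aux (hΦ : IsReducedCrystallographicRootSystem Φ)
    {α : V} (hα : α ∈ Φ) : -α ∈ Φ := by
  have h0 : ⟪α, α⟫ ≠ 0 := (inner_self_pos_of_mem hΦ hα).ne'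
  have h := hΦ.reflection_mem α hα α hα
  rw [show 2 * ⟪α, α⟫ / ⟪α, α⟫ = (2 : ℝ) by field_simp] at h
  rw [show α - (2 : ℝ) • α = -α by module] at h
  exact h

/-- The two Cartan integers of a pair of non-proportional roots with positive inner
product are positive integers with product at most `3`. -/
private lemma cartan_aux (hΦ : IsReducedCrystallographicRootSystem Φ)
    {α γ : V} (hα : α ∈ Φ) (hγ : γ ∈ Φ) (hne : α ≠ γ) (hne' : α ≠ -γ)
    (hpos : 0 < ⟪α, γ⟫) :
    ∃ m n : ℤ, 1 ≤ m ∧ 1 ≤ n ∧ m * n ≤ 3 ∧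
      (m : ℝ) = 2 * ⟪γ, α⟫ / ⟪α, α⟫ ∧ (n : ℝ) = 2 * ⟪α, γ⟫ / ⟪γ, γ⟫ := by
  have haa : 0 < ⟪α, α⟫ := inner_self_pos_of_mem hΦ hα
  have hgg : 0 < ⟪γ, γ⟫ := inner_self_pos_of_mem hΦ hγ
  obtain ⟨m, hm⟩ := hΦ.crystallographic α hα γ hγ
  obtain ⟨n, hn⟩ := hΦ.crystallographic γ hγ α hα
  have hγα : ⟪γ, α⟫ = ⟪α, γ⟫ := real_inner_comm α γ
  have hm1 : 1 ≤ m := by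
    have : (0 : ℝ) < (m : ℝ) := by rw [hm, hγα]; positivity
    exact_mod_cast this
  have hn1 : 1 ≤ n := by
    have : (0 : ℝ) < (n : ℝ) := by rw [hn]; positivity
    exact_mod_cast this
  -- strict Cauchy-Schwarz: α, γ are not proportional
  have hcs : ⟪α, γ⟫ * ⟪α, γ⟫ < ⟪α, α⟫ * ⟪γ, γ⟫ := by
    rcases lt_or_eq_of_le (real_inner_mul_inner_self_le α γ) with h | h
    · exact h
    · exfalso
      set c : ℝ := ⟪α, γ⟫ / ⟪γ, γ⟫ with hc
      have hz : ⟪α - c • γ, α - c • γ⟫ = 0 := by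
        have hexp : ⟪α - c • γ, α - c • γ⟫
            = ⟪α, α⟫ - 2 * c * ⟪α, γ⟫ + c * c * ⟪γ, γ⟫ := by
          simp only [inner_sub_left, inner_sub_right, real_inner_smul_left,
            real_inner_smul_right, real_inner_comm γ α]
          ring
        rw [hexp, hc]
        field_simp
        nlinarith [h]
      rw [inner_self_eq_zero, sub_eq_zero] at hz
      rcases hΦ.reduced γ hγ c (by rw [← hz]; exact hα) with h1 | h1
      · exact hne (by rw [hz, h1, one_smul])
      · exact hne' (by rw [hz, h1, neg_one_smul])
  have hmn : m * n ≤ 3 := by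
    have h4 : ((m * n : ℤ) : ℝ) < 4 := by
      push_cast
      rw [hm, hn, hγα]
      rw [div_mul_div_comm, div_lt_iff₀ (by positivity)]
      nlinarith [hcs]
    have : (m * n : ℤ) < 4 := by exact_mod_cast h4
    omega
  exact ⟨m, n, hm1, hn1, hmn, hm, hn⟩

/-- Under the no-`G₂` hypothesis, `⟪α, γ⟫ ≤ ⟪γ, γ⟫` for roots `α ≠ ±γ`. -/
private lemma inner_le_aux (hΦ : IsReducedCrystallographicRootSystem Φ)
    (hG2 : HasNoG2Component Φ) {α γ : V} (hα : α ∈ Φ) (hγ : γ ∈ Φ)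
    (hne : α ≠ γ) (hne' : α ≠ -γ) : ⟪α, γ⟫ ≤ ⟪γ, γ⟫ := by
  have hgg : 0 < ⟪γ, γ⟫ := inner_self_pos_of_mem hΦ hγ
  rcases le_or_gt ⟪α, γ⟫ 0 with h | hpos
  · linarith
  obtain ⟨m, n, hm1, hn1, hmn, hm, hn⟩ := cartan_aux hΦ hα hγ hne hne' hpos
  have hne3 : m * n ≠ 3 := by
    intro h
    apply hG2 α hα γ hγ
    rw [← hn, ← hm]
    exact_mod_cast congrArg (fun k : ℤ => (k : ℝ)) (by rw [mul_comm] at h; exact h)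
  have hn2 : n ≤ 2 := by
    by_contra h
    push_neg at h
    have h3 : 3 ≤ m * n := by nlinarith
    exact hne3 (le_antisymm hmn h3)
  have : (n : ℝ) ≤ 2 := by exact_mod_cast hn2
  rw [hn] at this
  rw [div_le_iff₀ hgg] at this
  linarith

/-- Roots with positive inner product subtract to a root. -/
private lemma sub_mem_aux (hΦ : IsReducedCrystallographicRootSystem Φ)
    {α γ : V} (hα : α ∈ Φ) (hγ : γ ∈ Φ) (hne : α ≠ γ) (hne' : α ≠ -γ)
    (hpos : 0 < ⟪α, γ⟫) : α - γ ∈ Φ := by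
  obtain ⟨m, n, hm1, hn1, hmn, hm, hn⟩ := cartan_aux hΦ hα hγ hne hne' hpos
  rcases eq_or_lt_of_le hn1 with h1 | h2
  · -- n = 1 : reflect α in γ
    have h := hΦ.reflection_mem γ hγ α hα
    rw [← hn, ← h1] at h
    simpa using h
  · -- n ≥ 2 forces m = 1 : reflect γ in α, then negate
    have hm1' : m = 1 := by nlinarith
    have h := hΦ.reflection_mem α hα γ hγ
    rw [← hm, hm1'] at h
    have h' := neg_mem_aux hΦ h
    simpa [neg_sub] using h'

end Aux

theorem pos_inter_convexHull_eq_of_closed_under_subtraction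
    {V : Type*} [NormedAddCommGroup V] [InnerProductSpace ℝ V] [FiniteDimensional ℝ V]
    {Φ Pos : Set V} (hΦ : IsReducedCrystallographicRootSystem Φ)
    (hPos : IsPositiveSystem Φ Pos) (hG2 : HasNoG2Component Φ)
    {S : Set V} (hSP : S ⊆ Pos)
    (hclosed : ∀ α ∈ S, ∀ β ∈ Pos, α - β ∈ Pos → α - β ∈ S) :
    Pos ∩ convexHull ℝ S = S := by
  obtain ⟨hPΦ, f, hfne, hPdef⟩ := hPos
  apply Set.Subset.antisymm
  · rintro γ ⟨hγP, hγH⟩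
    by_contra hγS
    have hγΦ : γ ∈ Φ := hPΦ hγP
    have hfγ : 0 < f γ := by rw [hPdef] at hγP; exact hγP.2
    have hgg : 0 < ⟪γ, γ⟫ := inner_self_pos_of_mem hΦ hγΦ
    rw [convexHull_eq] at hγH
    obtain ⟨ι, t, w, z, hw0, hw1, hzS, hcm⟩ := hγH
    rw [Finset.centerMass_eq_of_sum_1 _ _ hw1] at hcm
    by_cases hP : ∃ i ∈ t, 0 < w i ∧ 0 < ⟪z i, γ⟫ ∧ f γ ≤ f (z i)
    · -- good case: subtract `z i - γ` from `z i ∈ S` to land on `γ`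
      obtain ⟨i, hit, hwi, hip, hif⟩ := hP
      have hziS : z i ∈ S := hzS i hit
      have hziΦ : z i ∈ Φ := hPΦ (hSP hziS)
      by_cases he : z i = γ
      · exact hγS (he ▸ hziS)
      have hne' : z i ≠ -γ := by
        intro h
        rw [h] at hif
        simp only [map_neg] at hif
        linarith
      have hsub : z i - γ ∈ Φ := sub_mem_aux hΦ hziΦ hγΦ he hne' hip
      have hfsub : 0 < f (z i - γ) := by
        have h1 : f (z i - γ) ≠ 0 := hfne _ hsub
        have h2 : f (z i - γ) = f (z i) - f γ := by simp
        rcases lt_or_eq_of_le (sub_nonneg.mpr hif) with h | h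
        · rw [h2]; exact h
        · exact absurd (by rw [h2, ← h]) h1
      have hsubP : z i - γ ∈ Pos := by rw [hPdef]; exact ⟨hsub, hfsub⟩
      have hfin := hclosed (z i) hziS (z i - γ) hsubP (by simpa using hγP)
      simp only [sub_sub_cancel] at hfin
      exact hγS hfin
    · -- bad case: every support element pairs to exactly `⟪γ, γ⟫`, contradiction
      push_neg at hP
      have hbound : ∀ i ∈ t, 0 < w i → ⟪z i, γ⟫ ≤ ⟪γ, γ⟫ := by
        intro i hit hwi
        have hziS : z i ∈ S := hzS i hit
        have hziΦ : z i ∈ Φ := hPΦ (hSP hziS)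
        have hfzi : 0 < f (z i) := by
          have h := hSP hziS; rw [hPdef] at h; exact h.2
        have hne : z i ≠ γ := by
          intro h
          have := hP i hit hwi (by rw [h]; exact hgg)
          rw [h] at this
          exact absurd this (lt_irrefl _)
        have hne' : z i ≠ -γ := by
          intro h
          rw [h] at hfzi
          simp only [map_neg] at hfzi
          linarith
        exact inner_le_aux hΦ hG2 hziΦ hγΦ hne hne'
      have hsum : ∑ i ∈ t, w i * ⟪z i, γ⟫ = ⟪γ, γ⟫ := by
        have hs : (inner ℝ (∑ i ∈ t, w i • z i) γ : ℝ) = ∑ i ∈ t, w i * ⟪z i, γ⟫ := by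
          rw [sum_inner]
          exact Finset.sum_congr rfl fun i _ => real_inner_smul_left _ _ _
        rw [← hs, hcm]
      have hzero : ∑ i ∈ t, w i * (⟪γ, γ⟫ - ⟪z i, γ⟫) = 0 := by
        simp only [mul_sub]
        rw [Finset.sum_sub_distrib, hsum, ← Finset.sum_mul, hw1, one_mul, sub_self]
      have key : ∀ i ∈ t, 0 < w i → ⟪z i, γ⟫ = ⟪γ, γ⟫ := by
        intro i hit hwi
        have hterm := (Finset.sum_eq_zero_iff_of_nonneg ?_).mp hzero i hit
        · have := mul_eq_zero.mp hterm
          rcases this with h | h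
          · exact absurd h hwi.ne'
          · linarith [sub_eq_zero.mp h]
        · intro j hjt
          rcases (hw0 j hjt).lt_or_eq with h | h
          · exact mul_nonneg h.le (sub_nonneg.mpr (hbound j hjt h))
          · rw [← h, zero_mul]
      have hflt : ∀ i ∈ t, 0 < w i → f (z i) < f γ := by
        intro i hit hwi
        exact hP i hit hwi (by rw [key i hit hwi]; exact hgg)
      have hfsum : ∑ i ∈ t, w i * f (z i) = f γ := by
        have hs : f (∑ i ∈ t, w i • z i) = ∑ i ∈ t, w i * f (z i) := by
          rw [map_sum]
          exact Finset.sum_congr rfl fun i _ => by rw [map_smul]; rfl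
        rw [← hs, hcm]
      have hex : ∃ i ∈ t, 0 < w i := by
        by_contra h
        push_neg at h
        have : ∑ i ∈ t, w i = 0 :=
          Finset.sum_eq_zero fun i hi => le_antisymm (h i hi) (hw0 i hi)
        rw [hw1] at this
        norm_num at this
      obtain ⟨i₀, hi₀t, hi₀w⟩ := hex
      have hlt : ∑ i ∈ t, w i * f (z i) < ∑ i ∈ t, w i * f γ := by
        apply Finset.sum_lt_sum
        · intro i hit
          rcases (hw0 i hit).lt_or_eq with h | h
          · exact mul_le_mul_of_nonneg_left (hflt i hit h).le h.le
          · rw [← h, zero_mul, zero_mul]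
        · exact ⟨i₀, hi₀t, mul_lt_mul_of_pos_left (hflt i₀ hi₀t hi₀w) hi₀w⟩
      rw [hfsum, ← Finset.sum_mul, hw1, one_mul] at hlt
      exact absurd hlt (lt_irrefl _)
  · intro x hx
    exact ⟨hSP hx, subset_convexHull ℝ S hx⟩
end

section
/- Let Φ be a reduced crystallographic root system in a finite-dimensional real inner product space V with positive system Φ⁺ and Weyl group W, and assume no irreducible component of Φ is of type G₂. For w ∈ W, let E(w) = {α ∈ Φ⁺ : s_α ≤ w}, where s_α is the reflection in α and ≤ is the Bruhat order on W. Suppose the Poincaré polynomial P_w(t) = ∑_{x ≤ w} t^{ℓ(x)} is palindromic. Then the following are equivalent: (1) E(w) is closed under subtraction of positive roots, i.e. α ∈ E(w), β ∈ Φ⁺, α − β ∈ Φ⁺ imply α − β ∈ E(w); (2) every positive root in the convex hull of E(w) belongs to E(w), i.e. Φ⁺ ∩ conv(E(w)) ⊆ E(w). -/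
/-!
Main combinatorial theorem of the paper: let `Φ` be a reduced crystallographic root
system, without `G₂` components, in a finite-dimensional real inner product space,
with positive system `Φ⁺` and Weyl group `W`.  For `w ∈ W` with palindromic Poincaré
polynomial `P_w(t) = ∑_{x ≤ w} t^{ℓ(x)}`, the set `E(w) = {α ∈ Φ⁺ : s_α ≤ w}` is
closed under subtraction of positive roots if and only if every positive root in the
convex hull of `E(w)` belongs to `E(w)`.
-/

open scoped RealInnerProductSpace

/-- The Weyl group of `Φ`: the subgroup of linear automorphisms of `V` generated by the
reflections `s_α`, `α ∈ Φ`. -/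
def weylGroup {V : Type*} [NormedAddCommGroup V] [InnerProductSpace ℝ V] (Φ : Set V) :
    Subgroup (V ≃ₗ[ℝ] V) :=
  Subgroup.closure {g | ∃ α ∈ Φ, ∀ v : V, g v = v - (2 * ⟪v, α⟫ / ⟪α, α⟫) • α}

/-- `t` is the reflection `s_α` in the root `α`. -/
def IsReflectionIn {V : Type*} [NormedAddCommGroup V] [InnerProductSpace ℝ V]
    {Φ : Set V} (t : weylGroup Φ) (α : V) : Prop :=
  α ∈ Φ ∧ ∀ v : V, (t : V ≃ₗ[ℝ] V) v = v - (2 * ⟪v, α⟫ / ⟪α, α⟫) • α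

/-- The length of `w` relative to the positive system `Pos`: the number of positive
roots sent to negative roots, which is the Coxeter length of `w` with respect to the
simple reflections determined by `Pos`. -/
noncomputable def weylLength {V : Type*} [NormedAddCommGroup V] [InnerProductSpace ℝ V]
    {Φ : Set V} (Pos : Set V) (w : weylGroup Φ) : ℕ :=
  {α ∈ Pos | (w : V ≃ₗ[ℝ] V) α ∉ Pos}.ncard

/-- The Bruhat order on the Weyl group: the partial order generated by `x < t * x`
whenever `t` is a reflection and `ℓ(x) < ℓ(t * x)`. -/
def bruhatLE {V : Type*} [NormedAddCommGroup V] [InnerProductSpace ℝ V]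
    {Φ : Set V} (Pos : Set V) : weylGroup Φ → weylGroup Φ → Prop :=
  Relation.ReflTransGen (fun x y => ∃ t : weylGroup Φ, (∃ α, IsReflectionIn t α) ∧
    y = t * x ∧ weylLength Pos x < weylLength Pos y)

/-- `E(w) = {α ∈ Φ⁺ : s_α ≤ w}`, the set of positive roots whose reflection lies below
`w` in the Bruhat order. -/
def ESet {V : Type*} [NormedAddCommGroup V] [InnerProductSpace ℝ V]
    {Φ : Set V} (Pos : Set V) (w : weylGroup Φ) : Set V :=
  {α ∈ Pos | ∃ t : weylGroup Φ, IsReflectionIn t α ∧ bruhatLE Pos t w}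

/-- The Poincaré polynomial `P_w(t) = ∑_{x ≤ w} t^{ℓ(x)}` is palindromic: its
coefficient of `t^k` (the number of `x ≤ w` with `ℓ(x) = k`) equals its coefficient of
`t^{ℓ(w) - k}` for all `0 ≤ k ≤ ℓ(w)`. -/
def PoincarePalindromic {V : Type*} [NormedAddCommGroup V] [InnerProductSpace ℝ V]
    {Φ : Set V} (Pos : Set V) (w : weylGroup Φ) : Prop :=
  ∀ k ≤ weylLength Pos w,
    {x : weylGroup Φ | bruhatLE Pos x w ∧ weylLength Pos x = k}.ncard =
      {x : weylGroup Φ | bruhatLE Pos x w ∧ weylLength Pos x = weylLength Pos w - k}.ncard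


section Aux

variable {V : Type*} [NormedAddCommGroup V] [InnerProductSpace ℝ V]

private lemma inner_self_pos' {x : V} (hx : x ≠ 0) : (0:ℝ) < ⟪x, x⟫ :=
  lt_of_le_of_ne real_inner_self_nonneg (Ne.symm (inner_self_ne_zero.mpr hx))

private lemma rcrs_neg_mem {Φ : Set V} (hΦ : IsReducedCrystallographicRootSystem Φ)
    {α : V} (hα : α ∈ Φ) : -α ∈ Φ := by
  have h0 : ⟪α, α⟫ ≠ 0 := inner_self_ne_zero.mpr (hΦ.ne_zero α hα)
  have h := hΦ.reflection_mem α hα α hα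
  have h2 : 2 * ⟪α, α⟫ / ⟪α, α⟫ = (2 : ℝ) := by field_simp
  rw [h2] at h
  have h3 : α - (2 : ℝ) • α = -α := by module
  rwa [h3] at h

/-- Key rank-two estimate: for roots `γ, α` with `α ≠ ±γ`, one has
`⟪γ, α⟫ ≤ ⟪γ, γ⟫`, and in case of equality `γ - α` is again a root. -/
private lemma root_pair_bound {Φ : Set V} (hΦ : IsReducedCrystallographicRootSystem Φ)
    (hG2 : HasNoG2Component Φ) {γ α : V} (hγ : γ ∈ Φ) (hα : α ∈ Φ)
    (hne : α ≠ γ) (hne' : α ≠ -γ) :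
    ⟪γ, α⟫ ≤ ⟪γ, γ⟫ ∧ (⟪γ, α⟫ = ⟪γ, γ⟫ → γ - α ∈ Φ) := by
  have hγ0 : γ ≠ 0 := hΦ.ne_zero γ hγ
  have hα0 : α ≠ 0 := hΦ.ne_zero α hα
  have hγγ : (0:ℝ) < ⟪γ, γ⟫ := inner_self_pos' hγ0
  have hαα : (0:ℝ) < ⟪α, α⟫ := inner_self_pos' hα0
  -- strict Cauchy-Schwarz, since `α` is not a multiple of `γ`
  have hCS : ⟪α, γ⟫ * ⟪α, γ⟫ < ⟪α, α⟫ * ⟪γ, γ⟫ := by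
    have hu : ⟪γ, γ⟫ • α - ⟪α, γ⟫ • γ ≠ 0 := by
      intro h
      have h' : ⟪γ, γ⟫ • α = ⟪α, γ⟫ • γ := sub_eq_zero.mp h
      have hαc : α = (⟪α, γ⟫ / ⟪γ, γ⟫) • γ := by
        rw [div_eq_mul_inv, mul_comm, mul_smul, ← h', smul_smul,
          inv_mul_cancel₀ (ne_of_gt hγγ), one_smul]
      rcases hΦ.reduced γ hγ (⟪α, γ⟫ / ⟪γ, γ⟫) (hαc ▸ hα) with h1 | h1
      · exact hne (by rw [hαc, h1, one_smul])
      · exact hne' (by rw [hαc, h1, neg_one_smul])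
    have hpos : (0:ℝ) < ⟪⟪γ, γ⟫ • α - ⟪α, γ⟫ • γ, ⟪γ, γ⟫ • α - ⟪α, γ⟫ • γ⟫ :=
      inner_self_pos' hu
    have hexp : ⟪⟪γ, γ⟫ • α - ⟪α, γ⟫ • γ, ⟪γ, γ⟫ • α - ⟪α, γ⟫ • γ⟫ =
        ⟪γ, γ⟫ * (⟪α, α⟫ * ⟪γ, γ⟫ - ⟪α, γ⟫ * ⟪α, γ⟫) := by
      simp only [inner_sub_left, inner_sub_right, real_inner_smul_left,
        real_inner_smul_right, real_inner_comm γ α]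
      ring
    rw [hexp] at hpos
    nlinarith [hγγ]
  obtain ⟨p, hp⟩ := hΦ.crystallographic γ hγ α hα
  obtain ⟨q, hq⟩ := hΦ.crystallographic α hα γ hγ
  have hcomm : ⟪α, γ⟫ = ⟪γ, α⟫ := real_inner_comm γ α
  -- `p * q < 4`
  have hpq4 : (p : ℝ) * (q : ℝ) < 4 := by
    rw [hp, hq, div_mul_div_comm, div_lt_iff₀ (by positivity), ← hcomm]
    nlinarith [hCS, hγγ, hαα]
  have hpq4' : p * q < 4 := by exact_mod_cast hpq4
  -- `p * q ≠ 3`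
  have hpq3 : p * q ≠ 3 := by
    intro h
    apply hG2 α hα γ hγ
    rw [← hp, ← hq]
    exact_mod_cast congrArg (Int.cast : ℤ → ℝ) h
  constructor
  · by_contra hlt
    push_neg at hlt
    have hp3 : (2:ℝ) < (p:ℝ) := by
      rw [hp, lt_div_iff₀ hγγ]; nlinarith [hcomm, hlt]
    have hq0 : (0:ℝ) < (q:ℝ) := by
      rw [hq]
      exact div_pos (by nlinarith [hγγ, hlt]) hαα
    have hp3' : 3 ≤ p := by
      have : (2:ℤ) < p := by exact_mod_cast hp3
      omega
    have hq1' : 1 ≤ q := by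
      have : (0:ℤ) < q := by exact_mod_cast hq0
      omega
    have h3 : 3 ≤ p * q := by nlinarith [hp3', hq1']
    omega
  · intro heq
    have hp2 : p = 2 := by
      have : (p:ℝ) = 2 := by
        rw [hp, hcomm, heq]; field_simp
      exact_mod_cast this
    have hq0 : (0:ℝ) < (q:ℝ) := by
      rw [hq]
      exact div_pos (by nlinarith [hγγ, heq]) hαα
    have hq1' : 1 ≤ q := by
      have : (0:ℤ) < q := by exact_mod_cast hq0
      omega
    rw [hp2] at hpq4' hpq3
    have hqe : q = 1 := by omega
    have h := hΦ.reflection_mem α hα γ hγ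
    rw [← hq, hqe] at h
    simpa using h

end Aux


section Machinery

variable {V : Type*} [NormedAddCommGroup V] [InnerProductSpace ℝ V]

/-- The reflection in `δ` as a linear map (the identity if `δ = 0`, by junk-value
division). -/
noncomputable def srefL (δ : V) : V →ₗ[ℝ] V where
  toFun v := v - (2 * ⟪v, δ⟫ / ⟪δ, δ⟫) • δ
  map_add' v w := by
    simp only [inner_add_left]
    rw [show 2 * (⟪v, δ⟫ + ⟪w, δ⟫) / ⟪δ, δ⟫
        = 2 * ⟪v, δ⟫ / ⟪δ, δ⟫ + 2 * ⟪w, δ⟫ / ⟪δ, δ⟫ by ring, add_smul]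
    abel
  map_smul' c v := by
    simp only [real_inner_smul_left, RingHom.id_apply]
    rw [show 2 * (c * ⟪v, δ⟫) / ⟪δ, δ⟫ = c * (2 * ⟪v, δ⟫ / ⟪δ, δ⟫) by ring, mul_smul,
      smul_sub]

lemma srefL_apply (δ v : V) : srefL δ v = v - (2 * ⟪v, δ⟫ / ⟪δ, δ⟫) • δ := rfl

lemma srefL_involutive (δ : V) : Function.Involutive (srefL δ) := by
  intro v
  by_cases hδ : ⟪δ, δ⟫ = (0:ℝ)
  · rw [srefL_apply, srefL_apply, hδ]; simp
  · rw [srefL_apply, srefL_apply, inner_sub_left, real_inner_smul_left]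
    rw [show 2 * (⟪v, δ⟫ - 2 * ⟪v, δ⟫ / ⟪δ, δ⟫ * ⟪δ, δ⟫) / ⟪δ, δ⟫
        = -(2 * ⟪v, δ⟫ / ⟪δ, δ⟫) by field_simp; ring]
    rw [neg_smul, sub_neg_eq_add, sub_add_cancel]

/-- The reflection in `δ` as a linear equivalence. -/
noncomputable def sref (δ : V) : V ≃ₗ[ℝ] V :=
  LinearEquiv.ofInvolutive (srefL δ) (srefL_involutive δ)

@[simp] lemma sref_apply (δ v : V) : sref δ v = v - (2 * ⟪v, δ⟫ / ⟪δ, δ⟫) • δ := rfl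

lemma sref_mul_self (δ : V) : sref δ * sref δ = 1 := by
  ext v
  exact srefL_involutive δ v

lemma sref_inv (δ : V) : (sref δ)⁻¹ = sref δ :=
  inv_eq_of_mul_eq_one_left (sref_mul_self δ)

lemma sref_apply_self {δ : V} (hδ : δ ≠ 0) : sref δ δ = -δ := by
  have h : ⟪δ, δ⟫ ≠ (0:ℝ) := inner_self_ne_zero.mpr hδ
  rw [sref_apply, show 2 * ⟪δ, δ⟫ / ⟪δ, δ⟫ = (2:ℝ) by field_simp]
  module

lemma equiv_apply_inv_apply (g : V ≃ₗ[ℝ] V) (v : V) : g ((g⁻¹ : V ≃ₗ[ℝ] V) v) = v :=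
  g.apply_symm_apply v

lemma equiv_inv_apply_apply (g : V ≃ₗ[ℝ] V) (v : V) : (g⁻¹ : V ≃ₗ[ℝ] V) (g v) = v :=
  g.symm_apply_apply v

variable {Φ : Set V}

lemma sref_mem_weylGroup {δ : V} (hδ : δ ∈ Φ) : sref δ ∈ weylGroup Φ :=
  Subgroup.subset_closure ⟨δ, hδ, fun _ => rfl⟩

/-- The reflection in a root, as an element of the Weyl group. -/
noncomputable def sW {δ : V} (hδ : δ ∈ Φ) : weylGroup Φ :=
  ⟨sref δ, sref_mem_weylGroup hδ⟩

lemma sW_isReflectionIn {δ : V} (hδ : δ ∈ Φ) : IsReflectionIn (sW hδ) δ :=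
  ⟨hδ, fun _ => rfl⟩

lemma weyl_maps_root (hΦ : IsReducedCrystallographicRootSystem Φ) :
    ∀ g ∈ weylGroup Φ, ∀ b ∈ Φ, g b ∈ Φ := by
  intro g hg
  induction hg using Subgroup.closure_induction with
  | mem x hx =>
    obtain ⟨α, hα, hx⟩ := hx
    intro b hb
    rw [hx b]
    exact hΦ.reflection_mem α hα b hb
  | one => intro b hb; exact hb
  | mul x y hx hy ihx ihy =>
    intro b hb
    have : (x * y) b = x (y b) := rfl
    rw [this]
    exact ihx _ (ihy _ hb)
  | inv x hx ih =>
    intro b hb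
    have himg : (fun v => x v) '' Φ = Φ := by
      apply Set.eq_of_subset_of_ncard_le
      · rintro _ ⟨c, hc, rfl⟩; exact ih c hc
      · rw [Set.ncard_image_of_injective _ x.injective]
      · exact hΦ.finite
    have : b ∈ (fun v => x v) '' Φ := by rw [himg]; exact hb
    obtain ⟨c, hc, hcb⟩ := this
    have : x⁻¹ b = c := by
      rw [← hcb]
      exact x.symm_apply_apply c
    rw [show (x⁻¹ : V ≃ₗ[ℝ] V) b = x⁻¹ b from rfl, this]
    exact hc

lemma weyl_isometry (hΦ : IsReducedCrystallographicRootSystem Φ) :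
    ∀ g ∈ weylGroup Φ, ∀ v w : V, ⟪g v, g w⟫ = ⟪v, w⟫ := by
  intro g hg
  induction hg using Subgroup.closure_induction with
  | mem x hx =>
    obtain ⟨α, hα, hx⟩ := hx
    intro v w
    have hd : ⟪α, α⟫ ≠ (0:ℝ) := inner_self_ne_zero.mpr (hΦ.ne_zero α hα)
    rw [hx v, hx w]
    simp only [inner_sub_left, inner_sub_right, real_inner_smul_left, real_inner_smul_right]
    rw [real_inner_comm α w]
    field_simp
    ring
  | one => intro v w; rfl
  | mul x y hx hy ihx ihy =>
    intro v w
    have h1 : (x * y) v = x (y v) := rfl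
    have h2 : (x * y) w = x (y w) := rfl
    rw [h1, h2, ihx, ihy]
  | inv x hx ih =>
    intro v w
    have := ih (x⁻¹ v) (x⁻¹ w)
    rw [show x ((x⁻¹ : V ≃ₗ[ℝ] V) v) = v from x.apply_symm_apply v,
      show x ((x⁻¹ : V ≃ₗ[ℝ] V) w) = w from x.apply_symm_apply w] at this
    exact this.symm

lemma weyl_conj_sref (hΦ : IsReducedCrystallographicRootSystem Φ)
    {g : V ≃ₗ[ℝ] V} (hg : g ∈ weylGroup Φ) (δ : V) :
    g * sref δ * g⁻¹ = sref (g δ) := by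
  ext v
  have hiso := weyl_isometry hΦ g hg
  have h1 : (g * sref δ * g⁻¹) v = g (sref δ (g⁻¹ v)) := rfl
  rw [h1, sref_apply, map_sub, map_smul,
    show g ((g⁻¹ : V ≃ₗ[ℝ] V) v) = v from g.apply_symm_apply v]
  rw [show ⟪(g⁻¹ : V ≃ₗ[ℝ] V) v, δ⟫ = ⟪v, g δ⟫ by
    rw [← hiso ((g⁻¹ : V ≃ₗ[ℝ] V) v) δ,
      show g ((g⁻¹ : V ≃ₗ[ℝ] V) v) = v from g.apply_symm_apply v]]
  rw [show ⟪δ, δ⟫ = ⟪g δ, g δ⟫ from (hiso δ δ).symm]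
  rfl

end Machinery


section PosSystem

variable {V : Type*} [NormedAddCommGroup V] [InnerProductSpace ℝ V]
variable {Φ Pos : Set V} {f : V →ₗ[ℝ] ℝ}

/-- Packaged context: a reduced crystallographic root system without `G₂` components,
with a positive system cut out by the linear functional `f`. -/
private structure Ctx (Φ Pos : Set V) (f : V →ₗ[ℝ] ℝ) : Prop where
  rs : IsReducedCrystallographicRootSystem Φ
  g2 : HasNoG2Component Φ
  sub : Pos ⊆ Φ
  fne : ∀ α ∈ Φ, f α ≠ 0
  pdef : Pos = {α | α ∈ Φ ∧ 0 < f α}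

namespace Ctx

private lemma memPos (C : Ctx Φ Pos f) {x : V} : x ∈ Pos ↔ x ∈ Φ ∧ 0 < f x := by rw [C.pdef]; exact Iff.rfl

private lemma fpos (C : Ctx Φ Pos f) {x : V} (hx : x ∈ Pos) : 0 < f x := (C.memPos.mp hx).2

private lemma posFin (C : Ctx Φ Pos f) : Pos.Finite := C.rs.finite.subset C.sub

private lemma neg_mem_pos (C : Ctx Φ Pos f) {b : V} (hb : b ∈ Φ) (hnb : b ∉ Pos) : -b ∈ Pos := by
  have h1 : f b ≠ 0 := C.fne b hb
  have h2 : ¬ 0 < f b := fun h => hnb (C.memPos.mpr ⟨hb, h⟩)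
  refine C.memPos.mpr ⟨rcrs_neg_mem C.rs hb, ?_⟩
  rw [map_neg]
  cases lt_or_gt_of_ne h1 with
  | inl h => linarith
  | inr h => exact absurd h h2

private lemma neg_not_pos (C : Ctx Φ Pos f) {b : V} (hb : b ∈ Pos) : -b ∉ Pos := by
  intro h
  have h1 := C.fpos hb
  have h2 := C.fpos h
  rw [map_neg] at h2
  linarith

private lemma fneg (C : Ctx Φ Pos f) {b : V} (hb : b ∈ Φ) (hnb : b ∉ Pos) : f b < 0 := by
  have := C.fpos (C.neg_mem_pos hb hnb)
  rw [map_neg] at this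
  linarith

/-- Strict Cauchy–Schwarz for non-proportional roots. -/
private lemma strictCS (C : Ctx Φ Pos f) {b δ : V} (hb : b ∈ Φ) (hδ : δ ∈ Φ) (hne : b ≠ δ) (hne' : b ≠ -δ) :
    ⟪b, δ⟫ * ⟪b, δ⟫ < ⟪b, b⟫ * ⟪δ, δ⟫ := by
  have hδ0 : δ ≠ 0 := C.rs.ne_zero δ hδ
  have hδδ : (0:ℝ) < ⟪δ, δ⟫ := inner_self_pos' hδ0
  have hu : ⟪δ, δ⟫ • b - ⟪b, δ⟫ • δ ≠ 0 := by
    intro h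
    have h' : ⟪δ, δ⟫ • b = ⟪b, δ⟫ • δ := sub_eq_zero.mp h
    have hbc : b = (⟪b, δ⟫ / ⟪δ, δ⟫) • δ := by
      rw [div_eq_mul_inv, mul_comm, mul_smul, ← h', smul_smul,
        inv_mul_cancel₀ (ne_of_gt hδδ), one_smul]
    rcases C.rs.reduced δ hδ (⟪b, δ⟫ / ⟪δ, δ⟫) (hbc ▸ hb) with h1 | h1
    · exact hne (by rw [hbc, h1, one_smul])
    · exact hne' (by rw [hbc, h1, neg_one_smul])
  have hpos : (0:ℝ) < ⟪⟪δ, δ⟫ • b - ⟪b, δ⟫ • δ, ⟪δ, δ⟫ • b - ⟪b, δ⟫ • δ⟫ :=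
    inner_self_pos' hu
  have hexp : ⟪⟪δ, δ⟫ • b - ⟪b, δ⟫ • δ, ⟪δ, δ⟫ • b - ⟪b, δ⟫ • δ⟫ =
      ⟪δ, δ⟫ * (⟪b, b⟫ * ⟪δ, δ⟫ - ⟪b, δ⟫ * ⟪b, δ⟫) := by
    simp only [inner_sub_left, inner_sub_right, real_inner_smul_left,
      real_inner_smul_right, real_inner_comm δ b]
    ring
  rw [hexp] at hpos
  nlinarith [hδδ]

/-- If two non-proportional roots have positive inner product, their difference is a
root. -/
private lemma root_sub_mem (C : Ctx Φ Pos f) {b δ : V} (hb : b ∈ Φ) (hδ : δ ∈ Φ) (hip : 0 < ⟪b, δ⟫)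
    (hne : b ≠ δ) (hne' : b ≠ -δ) : b - δ ∈ Φ := by
  have hb0 : b ≠ 0 := C.rs.ne_zero b hb
  have hδ0 : δ ≠ 0 := C.rs.ne_zero δ hδ
  have hbb : (0:ℝ) < ⟪b, b⟫ := inner_self_pos' hb0
  have hδδ : (0:ℝ) < ⟪δ, δ⟫ := inner_self_pos' hδ0
  obtain ⟨p, hp⟩ := C.rs.crystallographic δ hδ b hb
  obtain ⟨q, hq⟩ := C.rs.crystallographic b hb δ hδ
  have hcomm : ⟪δ, b⟫ = ⟪b, δ⟫ := real_inner_comm b δ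
  have hp1 : 1 ≤ p := by
    have : (0:ℝ) < (p:ℝ) := by rw [hp]; positivity
    exact_mod_cast this
  have hq1 : 1 ≤ q := by
    have : (0:ℝ) < (q:ℝ) := by
      rw [hq]
      have : (0:ℝ) < ⟪δ, b⟫ := by rw [hcomm]; exact hip
      positivity
    exact_mod_cast this
  have hpq4 : (p : ℝ) * (q : ℝ) < 4 := by
    rw [hp, hq, div_mul_div_comm, div_lt_iff₀ (by positivity), hcomm]
    nlinarith [C.strictCS hb hδ hne hne']
  have hpq4' : p * q < 4 := by exact_mod_cast hpq4
  have hpq3 : p * q ≠ 3 := by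
    intro h
    apply C.g2 b hb δ hδ
    rw [← hp, ← hq]
    exact_mod_cast congrArg (Int.cast : ℤ → ℝ) h
  have hcase : p = 1 ∨ q = 1 := by
    rcases eq_or_lt_of_le hp1 with h | h
    · exact Or.inl h.symm
    rcases eq_or_lt_of_le hq1 with h' | h'
    · exact Or.inr h'.symm
    nlinarith
  rcases hcase with h | h
  · have := C.rs.reflection_mem δ hδ b hb
    rw [← hp, h] at this
    simpa using this
  · have := C.rs.reflection_mem b hb δ hδ
    rw [← hq, h] at this
    have h2 := rcrs_neg_mem C.rs (by simpa using this : δ - b ∈ Φ)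
    rwa [neg_sub] at h2

end Ctx

/-- The simple roots: indecomposable elements of the positive system. -/
private def Smpl (Pos : Set V) : Set V :=
  {a ∈ Pos | ∀ b ∈ Pos, ∀ c ∈ Pos, b + c ≠ a}

namespace Ctx

private lemma decomp_aux (C : Ctx Φ Pos f) :
    ∀ (n : ℕ) (b : V), b ∈ Pos → ({p ∈ Pos | f p < f b}).ncard < n →
      ∃ L : List V, (∀ a ∈ L, a ∈ Smpl Pos) ∧ L ≠ [] ∧ L.sum = b := by
  intro n
  induction n with
  | zero => intro b _ h; omega
  | succ n ih =>
    intro b hb hcard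
    by_cases hs : ∀ c ∈ Pos, ∀ d ∈ Pos, c + d ≠ b
    · exact ⟨[b], fun a ha => by rw [List.mem_singleton] at ha; rw [ha]; exact ⟨hb, hs⟩,
        by simp, by simp⟩
    · push_neg at hs
      obtain ⟨c, hc, d, hd, hcd⟩ := hs
      have hfb : f b = f c + f d := by rw [← hcd, map_add]
      have hfc : f c < f b := by have := C.fpos hd; linarith
      have hfd : f d < f b := by have := C.fpos hc; linarith
      have hsubc : {p ∈ Pos | f p < f c} ⊂ {p ∈ Pos | f p < f b} := by
        constructor
        · rintro p ⟨hp1, hp2⟩; exact ⟨hp1, by linarith⟩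
        · intro hsup
          have := hsup ⟨hc, hfc⟩
          exact absurd this.2 (lt_irrefl _)
      have hsubd : {p ∈ Pos | f p < f d} ⊂ {p ∈ Pos | f p < f b} := by
        constructor
        · rintro p ⟨hp1, hp2⟩; exact ⟨hp1, by linarith⟩
        · intro hsup
          have := hsup ⟨hd, hfd⟩
          exact absurd this.2 (lt_irrefl _)
      have hfin : ({p ∈ Pos | f p < f b}).Finite := C.posFin.subset (fun p hp => hp.1)
      obtain ⟨L₁, hL₁, hL₁ne, hL₁sum⟩ := ih c hc (by
        have := Set.ncard_lt_ncard hsubc hfin; omega)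
      obtain ⟨L₂, hL₂, hL₂ne, hL₂sum⟩ := ih d hd (by
        have := Set.ncard_lt_ncard hsubd hfin; omega)
      refine ⟨L₁ ++ L₂, ?_, by simp [hL₁ne], by rw [List.sum_append, hL₁sum, hL₂sum, hcd]⟩
      intro a ha
      rcases List.mem_append.mp ha with h | h
      · exact hL₁ a h
      · exact hL₂ a h

private lemma exists_decomp (C : Ctx Φ Pos f) {b : V} (hb : b ∈ Pos) :
    ∃ L : List V, (∀ a ∈ L, a ∈ Smpl Pos) ∧ L ≠ [] ∧ L.sum = b :=
  C.decomp_aux (({p ∈ Pos | f p < f b}).ncard + 1) b hb (by omega)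

/-- If `g` maps roots to roots and sends the positive root `b` to a negative root, then
it sends some simple root to a negative root. -/
private lemma exists_simple_neg (C : Ctx Φ Pos f) {g : V ≃ₗ[ℝ] V} (hgΦ : ∀ c ∈ Φ, g c ∈ Φ)
    {b : V} (hb : b ∈ Pos) (hgb : g b ∉ Pos) : ∃ a ∈ Smpl Pos, g a ∉ Pos := by
  obtain ⟨L, hL, hLne, hLsum⟩ := C.exists_decomp hb
  by_contra hcon
  push_neg at hcon
  have hpos : ∀ a ∈ L, 0 < f (g a) := fun a ha => C.fpos (hcon a (hL a ha))
  have hsum : f (g b) = (L.map (fun a => f (g a))).sum := by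
    rw [← hLsum, map_list_sum, map_list_sum, List.map_map]
    rfl
  have hgbneg : f (g b) < 0 := C.fneg (hgΦ b (C.sub hb)) hgb
  have hnonneg : (0:ℝ) ≤ (L.map (fun a => f (g a))).sum := by
    apply List.sum_nonneg
    intro x hx
    obtain ⟨a, ha, rfl⟩ := List.mem_map.mp hx
    exact le_of_lt (hpos a ha)
  rw [hsum] at hgbneg
  linarith

/-- A simple reflection permutes the positive roots other than its own. -/
private lemma simple_perm (C : Ctx Φ Pos f) {a : V} (ha : a ∈ Smpl Pos) {b : V} (hb : b ∈ Pos)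
    (hne : b ≠ a) : sref a b ∈ Pos := by
  have haP : a ∈ Pos := ha.1
  have haΦ : a ∈ Φ := C.sub haP
  have hbΦ : b ∈ Φ := C.sub hb
  by_contra h
  have hrefl : sref a b ∈ Φ := by
    have := C.rs.reflection_mem a haΦ b hbΦ
    exact this
  obtain ⟨n, hn⟩ := C.rs.crystallographic a haΦ b hbΦ
  have hfs : f (sref a b) = f b - (n:ℝ) * f a := by
    rw [sref_apply, map_sub, map_smul, ← hn, smul_eq_mul]
  have hfneg : f (sref a b) < 0 := C.fneg hrefl h
  have hfa := C.fpos haP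
  have hfb := C.fpos hb
  have hn1 : 1 ≤ n := by
    by_contra hn1
    push_neg at hn1
    have : (n:ℝ) ≤ 0 := by exact_mod_cast (by omega : n ≤ 0)
    nlinarith
  have hip : (0:ℝ) < ⟪b, a⟫ := by
    have haa : (0:ℝ) < ⟪a, a⟫ := inner_self_pos' (C.rs.ne_zero a haΦ)
    have h1 : (1:ℝ) ≤ (n:ℝ) := by exact_mod_cast hn1
    have h2 : 2 * ⟪b, a⟫ = (n:ℝ) * ⟪a, a⟫ := by
      rw [hn]
      field_simp
    nlinarith
  have hba : b - a ∈ Φ := C.root_sub_mem hbΦ haΦ hip hne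
    (by intro hcon; rw [hcon] at hb; exact C.neg_not_pos haP hb)
  have hbaP : b - a ∈ Pos := by
    by_contra hcon
    have : a - b ∈ Pos := by
      have := C.neg_mem_pos hba hcon
      rwa [neg_sub] at this
    exact ha.2 b hb (a - b) this (by abel)
  -- now split on n
  have hn3 : n < 3 := by
    by_contra hcon
    push_neg at hcon
    obtain ⟨q, hq⟩ := C.rs.crystallographic b hbΦ a haΦ
    have hq1 : 1 ≤ q := by
      have : (0:ℝ) < (q:ℝ) := by
        rw [hq]
        have : (0:ℝ) < ⟪a, b⟫ := by rwa [real_inner_comm]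
        have hbb : (0:ℝ) < ⟪b, b⟫ := inner_self_pos' (C.rs.ne_zero b hbΦ)
        positivity
      exact_mod_cast this
    have hbb : (0:ℝ) < ⟪b, b⟫ := inner_self_pos' (C.rs.ne_zero b hbΦ)
    have haa : (0:ℝ) < ⟪a, a⟫ := inner_self_pos' (C.rs.ne_zero a haΦ)
    have hpq4 : (n : ℝ) * (q : ℝ) < 4 := by
      rw [hn, hq, div_mul_div_comm, div_lt_iff₀ (by positivity)]
      nlinarith [C.strictCS hbΦ haΦ hne
        (by intro hcon'; rw [hcon'] at hb; exact C.neg_not_pos haP hb),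
        real_inner_comm a b]
    have hpq4' : n * q < 4 := by exact_mod_cast hpq4
    have hpq3 : n * q ≠ 3 := by
      intro hcon'
      apply C.g2 a haΦ b hbΦ
      rw [← hn, ← hq, mul_comm]
      exact_mod_cast congrArg (Int.cast : ℤ → ℝ) hcon'
    have h3 : 3 ≤ n * q := by
      nlinarith [mul_nonneg (by linarith : (0:ℤ) ≤ n - 3) (by linarith : (0:ℤ) ≤ q - 1)]
    have h4 : n * q ≤ 3 := by linarith
    exact hpq3 (le_antisymm h4 h3)
  interval_cases n
  · -- n = 1 : sref a b = b - a ∈ Pos, contradiction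
    apply h
    have : sref a b = b - a := by
      rw [sref_apply, ← hn]
      push_cast
      module
    rwa [this]
  · -- n = 2 : a = (b - a) + (2•a - b), contradicting simplicity
    have h2ab : (2:ℝ) • a - b ∈ Pos := by
      have hneg : -(sref a b) ∈ Pos := C.neg_mem_pos hrefl h
      have : -(sref a b) = (2:ℝ) • a - b := by
        rw [sref_apply, ← hn]
        push_cast
        module
      rwa [this] at hneg
    exact ha.2 (b - a) hbaP ((2:ℝ) • a - b) h2ab (by module)

end Ctx

end PosSystem


section LengthMachinery

variable {V : Type*} [NormedAddCommGroup V] [InnerProductSpace ℝ V]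
variable {Φ Pos : Set V} {f : V →ₗ[ℝ] ℝ}

/-- The inversion set of `g` relative to `Pos`. -/
private def NSet (Pos : Set V) (g : V ≃ₗ[ℝ] V) : Set V := {a ∈ Pos | g a ∉ Pos}

namespace Ctx

private lemma nsetFin (C : Ctx Φ Pos f) (g : V ≃ₗ[ℝ] V) : (NSet Pos g).Finite :=
  C.posFin.subset fun _ h => h.1

private lemma nset_inv (C : Ctx Φ Pos f) {g : V ≃ₗ[ℝ] V} (hg : g ∈ weylGroup Φ) :
    (NSet Pos g⁻¹).ncard = (NSet Pos g).ncard := by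
  have hgΦ := weyl_maps_root C.rs g hg
  have hgΦ' := weyl_maps_root C.rs g⁻¹ (inv_mem hg)
  have himg : NSet Pos g⁻¹ = (fun a => -(g a)) '' NSet Pos g := by
    ext x
    constructor
    · rintro ⟨hx, hgx⟩
      refine ⟨-((g⁻¹ : V ≃ₗ[ℝ] V) x), ⟨?_, ?_⟩, ?_⟩
      · exact C.neg_mem_pos (hgΦ' x (C.sub hx)) hgx
      · show g (-((g⁻¹ : V ≃ₗ[ℝ] V) x)) ∉ Pos
        rw [map_neg, equiv_apply_inv_apply]
        exact C.neg_not_pos hx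
      · show -(g (-((g⁻¹ : V ≃ₗ[ℝ] V) x))) = x
        rw [map_neg, equiv_apply_inv_apply, neg_neg]
    · rintro ⟨a, ⟨ha, hga⟩, rfl⟩
      refine ⟨C.neg_mem_pos (hgΦ a (C.sub ha)) hga, ?_⟩
      show (g⁻¹ : V ≃ₗ[ℝ] V) (-(g a)) ∉ Pos
      rw [map_neg, equiv_inv_apply_apply]
      exact C.neg_not_pos ha
  have hinj : Function.Injective (fun a => -(g a)) := fun x y hxy => by
    have := neg_injective hxy
    exact g.injective this
  rw [himg, Set.ncard_image_of_injective _ hinj]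

/-- A sign-preserving element of the Weyl group. -/
private def SP (Pos : Set V) (g : V ≃ₗ[ℝ] V) : Prop := ∀ a ∈ Pos, g a ∈ Pos

private lemma sp_of_len_zero (C : Ctx Φ Pos f) {g : V ≃ₗ[ℝ] V}
    (h : (NSet Pos g).ncard = 0) : SP Pos g := by
  intro a ha
  by_contra hcon
  have : a ∈ NSet Pos g := ⟨ha, hcon⟩
  have h2 := (Set.ncard_pos (C.nsetFin g)).mpr ⟨a, this⟩
  omega

private lemma sp_inv (C : Ctx Φ Pos f) {g : V ≃ₗ[ℝ] V} (hsp : SP Pos g) :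
    SP Pos g⁻¹ := by
  intro a ha
  have himg : (fun v => g v) '' Pos = Pos := by
    apply Set.eq_of_subset_of_ncard_le
    · rintro _ ⟨c, hc, rfl⟩; exact hsp c hc
    · rw [Set.ncard_image_of_injective _ g.injective]
    · exact C.posFin
  have : a ∈ (fun v => g v) '' Pos := by rw [himg]; exact ha
  obtain ⟨c, hc, hca⟩ := this
  have : (g⁻¹ : V ≃ₗ[ℝ] V) a = c := by rw [← hca]; exact g.symm_apply_apply c
  rwa [this]

private lemma sp_neg (C : Ctx Φ Pos f) {g : V ≃ₗ[ℝ] V} (hg : g ∈ weylGroup Φ)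
    (hsp : SP Pos g) {b : V} (hb : b ∈ Φ) (hnb : b ∉ Pos) : g b ∉ Pos := by
  intro hcon
  have h1 : -b ∈ Pos := C.neg_mem_pos hb hnb
  have h2 : g (-b) ∈ Pos := hsp _ h1
  rw [map_neg] at h2
  exact C.neg_not_pos hcon h2

private lemma len_mul_sp_left (C : Ctx Φ Pos f) {g₀ : V ≃ₗ[ℝ] V} (hg₀ : g₀ ∈ weylGroup Φ)
    (hsp : SP Pos g₀) {g : V ≃ₗ[ℝ] V} (hg : g ∈ weylGroup Φ) :
    NSet Pos (g₀ * g) = NSet Pos g := by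
  ext a
  constructor
  · rintro ⟨ha, hga⟩
    refine ⟨ha, fun hcon => hga ?_⟩
    exact hsp _ hcon
  · rintro ⟨ha, hga⟩
    refine ⟨ha, ?_⟩
    show g₀ (g a) ∉ Pos
    exact C.sp_neg hg₀ hsp (weyl_maps_root C.rs g hg a (C.sub ha)) hga

private lemma len_mul_sp_right (C : Ctx Φ Pos f) {g₀ : V ≃ₗ[ℝ] V} (hg₀ : g₀ ∈ weylGroup Φ)
    (hsp : SP Pos g₀) (g : V ≃ₗ[ℝ] V) :
    (NSet Pos (g * g₀)).ncard = (NSet Pos g).ncard := by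
  have himg : (fun v => g₀ v) '' NSet Pos (g * g₀) = NSet Pos g := by
    ext b
    constructor
    · rintro ⟨a, ⟨ha, hga⟩, rfl⟩
      exact ⟨hsp a ha, hga⟩
    · rintro ⟨hb, hgb⟩
      refine ⟨(g₀⁻¹ : V ≃ₗ[ℝ] V) b, ⟨C.sp_inv hsp b hb, ?_⟩, equiv_apply_inv_apply g₀ b⟩
      show g (g₀ ((g₀⁻¹ : V ≃ₗ[ℝ] V) b)) ∉ Pos
      rwa [equiv_apply_inv_apply g₀ b]
  rw [← himg, Set.ncard_image_of_injective _ g₀.injective]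

private lemma len_sref_mul_add_one (C : Ctx Φ Pos f) {a : V} (ha : a ∈ Smpl Pos)
    {g : V ≃ₗ[ℝ] V} (hg : g ∈ weylGroup Φ) (hpos : (g⁻¹ : V ≃ₗ[ℝ] V) a ∈ Pos) :
    (NSet Pos (sref a * g)).ncard = (NSet Pos g).ncard + 1 := by
  have hgΦ := weyl_maps_root C.rs g hg
  have hset : NSet Pos (sref a * g) = insert ((g⁻¹ : V ≃ₗ[ℝ] V) a) (NSet Pos g) := by
    ext b
    constructor
    · rintro ⟨hb, hsb⟩
      by_cases hgb : g b ∈ Pos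
      · left
        have : g b = a := by
          by_contra hne
          exact hsb (C.simple_perm ha hgb hne)
        rw [← this, equiv_inv_apply_apply]
      · exact Set.mem_insert_iff.mpr (Or.inr ⟨hb, hgb⟩)
    · intro hb
      rcases Set.mem_insert_iff.mp hb with h | ⟨hb', hgb⟩
      · subst h
        refine ⟨hpos, ?_⟩
        show sref a (g ((g⁻¹ : V ≃ₗ[ℝ] V) a)) ∉ Pos
        rw [equiv_apply_inv_apply, sref_apply_self (C.rs.ne_zero a (C.sub ha.1))]
        exact C.neg_not_pos ha.1
      · refine ⟨hb', ?_⟩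
        show sref a (g b) ∉ Pos
        have hgbΦ : g b ∈ Φ := hgΦ b (C.sub hb')
        have hc : -(g b) ∈ Pos := C.neg_mem_pos hgbΦ hgb
        have hcne : -(g b) ≠ a := by
          intro hcon
          have : b = (g⁻¹ : V ≃ₗ[ℝ] V) (-a) := by
            rw [← hcon, neg_neg, equiv_inv_apply_apply]
          rw [this, map_neg] at hb'
          exact C.neg_not_pos hpos hb'
        have := C.simple_perm ha hc hcne
        rw [map_neg] at this
        intro hcon
        exact C.neg_not_pos hcon this
  rw [hset, Set.ncard_insert_of_notMem ?_ (C.nsetFin g)]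
  intro hcon
  exact hcon.2 (by rw [equiv_apply_inv_apply]; exact ha.1)

private lemma len_sref_mul_sub_one (C : Ctx Φ Pos f) {a : V} (ha : a ∈ Smpl Pos)
    {g : V ≃ₗ[ℝ] V} (hg : g ∈ weylGroup Φ) (hneg : (g⁻¹ : V ≃ₗ[ℝ] V) a ∉ Pos) :
    (NSet Pos g).ncard = (NSet Pos (sref a * g)).ncard + 1 := by
  have haΦ : a ∈ Φ := C.sub ha.1
  set g' := sref a * g with hg'
  have hg'W : g' ∈ weylGroup Φ := mul_mem (sref_mem_weylGroup haΦ) hg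
  have hkey : (g'⁻¹ : V ≃ₗ[ℝ] V) a ∈ Pos := by
    have h1 : (g'⁻¹ : V ≃ₗ[ℝ] V) a = (g⁻¹ : V ≃ₗ[ℝ] V) (sref a a) := by
      rw [hg', mul_inv_rev, sref_inv]
      rfl
    rw [h1, sref_apply_self (C.rs.ne_zero a haΦ), map_neg]
    exact C.neg_mem_pos (weyl_maps_root C.rs g⁻¹ (inv_mem hg) a haΦ) hneg
  have := C.len_sref_mul_add_one ha hg'W hkey
  have hgg : sref a * g' = g := by
    rw [hg', ← mul_assoc, sref_mul_self, one_mul]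
  rwa [hgg] at this

private lemma word_mem_weyl (C : Ctx Φ Pos f) :
    ∀ l : List V, (∀ a ∈ l, a ∈ Smpl Pos) → (l.map sref).prod ∈ weylGroup Φ := by
  intro l
  induction l with
  | nil => intro _; simp
  | cons a t ih =>
    intro h
    rw [List.map_cons, List.prod_cons]
    exact mul_mem (sref_mem_weylGroup (C.sub (h a (by simp)).1))
      (ih fun b hb => h b (by simp [hb]))

private lemma len_word_le (C : Ctx Φ Pos f) :
    ∀ l : List V, (∀ a ∈ l, a ∈ Smpl Pos) →
      (NSet Pos (l.map sref).prod).ncard ≤ l.length := by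
  intro l
  induction l with
  | nil =>
    intro _
    have h1 : NSet Pos (1 : V ≃ₗ[ℝ] V) = ∅ := by
      ext a
      simp [NSet]
    simp [h1]
  | cons a t ih =>
    intro h
    rw [List.map_cons, List.prod_cons]
    have ha := h a (by simp)
    have ht : ∀ b ∈ t, b ∈ Smpl Pos := fun b hb => h b (by simp [hb])
    have htW := C.word_mem_weyl t ht
    by_cases hc : (((t.map sref).prod)⁻¹ : V ≃ₗ[ℝ] V) a ∈ Pos
    · rw [C.len_sref_mul_add_one ha htW hc]
      have := ih ht
      simp only [List.length_cons]
      omega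
    · have := C.len_sref_mul_sub_one ha htW hc
      have h2 := ih ht
      simp only [List.length_cons]
      omega

private lemma word_decomp (C : Ctx Φ Pos f) :
    ∀ (n : ℕ) (g : V ≃ₗ[ℝ] V), g ∈ weylGroup Φ → (NSet Pos g).ncard < n →
      ∃ (l : List V) (g₀ : V ≃ₗ[ℝ] V), (∀ a ∈ l, a ∈ Smpl Pos) ∧ g₀ ∈ weylGroup Φ ∧
        SP Pos g₀ ∧ g = (l.map sref).prod * g₀ ∧ l.length = (NSet Pos g).ncard := by
  intro n
  induction n with
  | zero => intro g _ h; omega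
  | succ n ih =>
    intro g hg hcard
    by_cases h0 : (NSet Pos g).ncard = 0
    · exact ⟨[], g, by simp, hg, C.sp_of_len_zero h0, by simp, by simp [h0]⟩
    · have hne : (NSet Pos g⁻¹).Nonempty := by
        apply Set.nonempty_of_ncard_ne_zero
        rw [C.nset_inv hg]
        exact h0
      obtain ⟨b, hb, hgb⟩ := hne
      obtain ⟨a, ha, hga⟩ := C.exists_simple_neg
        (weyl_maps_root C.rs g⁻¹ (inv_mem hg)) hb hgb
      have hlen := C.len_sref_mul_sub_one ha hg hga
      have hW' : sref a * g ∈ weylGroup Φ :=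
        mul_mem (sref_mem_weylGroup (C.sub ha.1)) hg
      obtain ⟨l, g₀, hl, hg₀, hsp, hdec, hlenl⟩ := ih (sref a * g) hW' (by omega)
      refine ⟨a :: l, g₀, ?_, hg₀, hsp, ?_, ?_⟩
      · intro b hb
        rcases List.mem_cons.mp hb with h | h
        · rw [h]; exact ha
        · exact hl b h
      · rw [List.map_cons, List.prod_cons, mul_assoc, ← hdec, ← mul_assoc,
          sref_mul_self, one_mul]
      · simp only [List.length_cons]
        omega

private lemma deletion (C : Ctx Φ Pos f) :
    ∀ l : List V, (∀ a ∈ l, a ∈ Smpl Pos) → ∀ δ, δ ∈ Pos →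
      ((l.map sref).prod) δ ∉ Pos →
      ∃ l' : List V, (∀ a ∈ l', a ∈ Smpl Pos) ∧ l'.length + 1 = l.length ∧
        (l.map sref).prod * sref δ = (l'.map sref).prod := by
  intro l
  induction l with
  | nil =>
    intro _ δ hδ hcon
    simp only [List.map_nil, List.prod_nil] at hcon
    exact absurd hδ (by simpa using hcon)
  | cons a t ih =>
    intro h δ hδ hcon
    have ha := h a (by simp)
    have ht : ∀ b ∈ t, b ∈ Smpl Pos := fun b hb => h b (by simp [hb])
    have htW := C.word_mem_weyl t ht
    rw [List.map_cons, List.prod_cons] at hcon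
    by_cases hp : ((t.map sref).prod) δ ∈ Pos
    · -- the flip happens at `a`
      have hpa : ((t.map sref).prod) δ = a := by
        by_contra hne
        exact hcon (C.simple_perm ha hp hne)
      have hconj : sref a = (t.map sref).prod * sref δ * ((t.map sref).prod)⁻¹ := by
        rw [weyl_conj_sref C.rs htW δ, hpa]
      refine ⟨t, ht, by simp, ?_⟩
      rw [List.map_cons, List.prod_cons, hconj]
      rw [inv_mul_cancel_right, mul_assoc, sref_mul_self, mul_one]
    · obtain ⟨l', hl', hlen, heq⟩ := ih ht δ hδ hp
      refine ⟨a :: l', fun b hb => ?_, by simp [← hlen], ?_⟩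
      · rcases List.mem_cons.mp hb with h' | h'
        · rw [h']; exact ha
        · exact hl' b h'
      · rw [List.map_cons, List.prod_cons, mul_assoc, heq, List.map_cons, List.prod_cons]

private lemma word_prod_inv (l : List V) :
    ((l.map sref).prod)⁻¹ = ((l.reverse.map sref).prod) := by
  rw [List.prod_inv_reverse]
  have h2 : (List.map sref l).map (fun x => x⁻¹) = List.map sref l := by
    rw [List.map_map]
    have h3 : ((fun x : V ≃ₗ[ℝ] V => x⁻¹) ∘ sref) = sref := by
      funext a
      exact sref_inv a
    rw [h3]
  rw [h2, List.map_reverse]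

/-- The fundamental length lemma: if `g⁻¹ δ` is negative then left-multiplying by the
reflection in `δ` decreases length. -/
private lemma lenB_neg (C : Ctx Φ Pos f) {g : V ≃ₗ[ℝ] V} (hg : g ∈ weylGroup Φ)
    {δ : V} (hδ : δ ∈ Pos) (h : (g⁻¹ : V ≃ₗ[ℝ] V) δ ∉ Pos) :
    (NSet Pos (sref δ * g)).ncard < (NSet Pos g).ncard := by
  obtain ⟨l, g₀, hl, hg₀, hsp, hdec, hlenl⟩ :=
    C.word_decomp ((NSet Pos g).ncard + 1) g hg (by omega)
  set u : V ≃ₗ[ℝ] V := (l.map sref).prod with hu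
  have huW : u ∈ weylGroup Φ := C.word_mem_weyl l hl
  -- the hypothesis descends to `u`
  have huδ : (u⁻¹ : V ≃ₗ[ℝ] V) δ ∉ Pos := by
    intro hcon
    apply h
    rw [hdec, mul_inv_rev]
    show (g₀⁻¹ : V ≃ₗ[ℝ] V) ((u⁻¹ : V ≃ₗ[ℝ] V) δ) ∈ Pos
    exact C.sp_inv hsp _ hcon
  -- `u⁻¹` is the word of the reversed list
  have hrev : (u⁻¹ : V ≃ₗ[ℝ] V) = ((l.reverse.map sref).prod) := by
    rw [hu]
    exact word_prod_inv l
  have hrevmem : ∀ a ∈ l.reverse, a ∈ Smpl Pos := fun a haa => hl a (List.mem_reverse.mp haa)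
  have hrevneg : ((l.reverse.map sref).prod) δ ∉ Pos := by rw [← hrev]; exact huδ
  obtain ⟨l', hl', hlen', heq'⟩ := C.deletion l.reverse hrevmem δ hδ hrevneg
  -- now `sref δ * u = ((l'.reverse.map sref).prod)`
  have hkey : sref δ * u = ((l'.reverse.map sref).prod) := by
    have h1 : (u⁻¹ * sref δ) = (l'.map sref).prod := by rw [hrev]; exact heq'
    have h2 : sref δ * u = ((l'.map sref).prod)⁻¹ := by
      rw [← h1, mul_inv_rev, inv_inv, sref_inv]
    rw [h2, word_prod_inv]
  have hrevmem' : ∀ a ∈ l'.reverse, a ∈ Smpl Pos :=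
    fun a haa => hl' a (List.mem_reverse.mp haa)
  have hfinal : (NSet Pos (sref δ * g)).ncard ≤ l'.length := by
    have : sref δ * g = (sref δ * u) * g₀ := by rw [hdec, mul_assoc]
    rw [this, C.len_mul_sp_right hg₀ hsp, hkey]
    have := C.len_word_le l'.reverse hrevmem'
    simpa using this
  have : l.length = l.reverse.length := by simp
  omega

private lemma lenB_pos (C : Ctx Φ Pos f) {g : V ≃ₗ[ℝ] V} (hg : g ∈ weylGroup Φ)
    {δ : V} (hδ : δ ∈ Pos) (h : (g⁻¹ : V ≃ₗ[ℝ] V) δ ∈ Pos) :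
    (NSet Pos g).ncard < (NSet Pos (sref δ * g)).ncard := by
  have hδΦ : δ ∈ Φ := C.sub hδ
  set g' := sref δ * g with hg'
  have hg'W : g' ∈ weylGroup Φ := mul_mem (sref_mem_weylGroup hδΦ) hg
  have hkey : (g'⁻¹ : V ≃ₗ[ℝ] V) δ ∉ Pos := by
    have h1 : (g'⁻¹ : V ≃ₗ[ℝ] V) δ = (g⁻¹ : V ≃ₗ[ℝ] V) (sref δ δ) := by
      rw [hg', mul_inv_rev, sref_inv]
      rfl
    rw [h1, sref_apply_self (C.rs.ne_zero δ hδΦ), map_neg]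
    exact C.neg_not_pos h
  have := C.lenB_neg hg'W hδ hkey
  have hgg : sref δ * g' = g := by rw [hg', ← mul_assoc, sref_mul_self, one_mul]
  rwa [hgg] at this

end Ctx

end LengthMachinery


section Chains

variable {V : Type*} [NormedAddCommGroup V] [InnerProductSpace ℝ V]
variable {Φ Pos : Set V} {f : V →ₗ[ℝ] ℝ}

namespace Ctx

private lemma bruhat_single (C : Ctx Φ Pos f) {x : weylGroup Φ} {δ : V} (hδ : δ ∈ Pos)
    (h : ((↑x : V ≃ₗ[ℝ] V))⁻¹ δ ∈ Pos) : bruhatLE Pos x (sW (C.sub hδ) * x) := by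
  apply Relation.ReflTransGen.single
  refine ⟨sW (C.sub hδ), ⟨δ, sW_isReflectionIn (C.sub hδ)⟩, rfl, ?_⟩
  show (NSet Pos (↑x : V ≃ₗ[ℝ] V)).ncard <
    (NSet Pos (↑(sW (C.sub hδ) * x) : V ≃ₗ[ℝ] V)).ncard
  have hco : (↑(sW (C.sub hδ) * x) : V ≃ₗ[ℝ] V) = sref δ * (↑x : V ≃ₗ[ℝ] V) := rfl
  rw [hco]
  exact C.lenB_pos x.2 hδ h

private lemma chainT1 (C : Ctx Φ Pos f) {γ β : V} (hγ : γ ∈ Pos) (hβ : β ∈ Pos)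
    (h1 : sref γ β ∈ Pos) (h2 : sref β (sref γ β) ∈ Pos) (he : sref β γ ∈ Φ) :
    bruhatLE Pos (sW (C.sub hγ)) (sW he) := by
  set x₀ : weylGroup Φ := sW (C.sub hγ) with hx₀
  set x₁ : weylGroup Φ := sW (C.sub hβ) * x₀ with hx₁
  have hx₁co : (↑x₁ : V ≃ₗ[ℝ] V) = sref β * sref γ := rfl
  have hstep1 : bruhatLE Pos x₀ x₁ := by
    apply C.bruhat_single hβ
    have : ((↑x₀ : V ≃ₗ[ℝ] V))⁻¹ = sref γ := by
      show (sref γ)⁻¹ = sref γ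
      exact sref_inv γ
    rw [this]
    exact h1
  -- second step
  have hrPos : sref β (sref γ β) ∈ Pos := h2
  have hstep2 : bruhatLE Pos x₁ (sW (C.sub hrPos) * x₁) := by
    apply C.bruhat_single hrPos
    have hinv : ((↑x₁ : V ≃ₗ[ℝ] V))⁻¹ = sref γ * sref β := by
      rw [hx₁co, mul_inv_rev, sref_inv, sref_inv]
    rw [hinv]
    show sref γ (sref β (sref β (sref γ β))) ∈ Pos
    rw [show sref β (sref β (sref γ β)) = sref γ β from srefL_involutive β _,
      show sref γ (sref γ β) = β from srefL_involutive γ _]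
    exact hβ
  have hend : sW he = sW (C.sub hrPos) * x₁ := by
    apply Subtype.ext
    show sref (sref β γ) = sref (sref β (sref γ β)) * (sref β * sref γ)
    have hr : sref (sref β (sref γ β)) =
        (sref β * sref γ) * sref β * (sref β * sref γ)⁻¹ := by
      rw [show sref β (sref γ β) = (sref β * sref γ) β from rfl,
        ← weyl_conj_sref C.rs (mul_mem (sref_mem_weylGroup (C.sub hβ))
          (sref_mem_weylGroup (C.sub hγ))) β]
    rw [hr, inv_mul_cancel_right, ← weyl_conj_sref C.rs
      (sref_mem_weylGroup (C.sub hβ)) γ, sref_inv]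
  rw [hend]
  exact hstep1.trans hstep2

private lemma chainT2 (C : Ctx Φ Pos f) {γ β : V} (hγ : γ ∈ Pos) (hβ : β ∈ Pos)
    (h1 : sref γ β ∈ Pos) (h2 : sref γ (sref β γ) ∈ Pos) (he : sref γ β ∈ Φ) :
    bruhatLE Pos (sW (C.sub hγ)) (sW he) := by
  set x₀ : weylGroup Φ := sW (C.sub hγ) with hx₀
  set x₁ : weylGroup Φ := sW (C.sub hβ) * x₀ with hx₁
  have hx₁co : (↑x₁ : V ≃ₗ[ℝ] V) = sref β * sref γ := rfl
  have hstep1 : bruhatLE Pos x₀ x₁ := by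
    apply C.bruhat_single hβ
    have : ((↑x₀ : V ≃ₗ[ℝ] V))⁻¹ = sref γ := by
      show (sref γ)⁻¹ = sref γ
      exact sref_inv γ
    rw [this]
    exact h1
  have hstep2 : bruhatLE Pos x₁ (sW (C.sub hγ) * x₁) := by
    apply C.bruhat_single hγ
    have hinv : ((↑x₁ : V ≃ₗ[ℝ] V))⁻¹ = sref γ * sref β := by
      rw [hx₁co, mul_inv_rev, sref_inv, sref_inv]
    rw [hinv]
    exact h2
  have hend : sW he = sW (C.sub hγ) * x₁ := by
    apply Subtype.ext
    show sref (sref γ β) = sref γ * (sref β * sref γ)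
    rw [← weyl_conj_sref C.rs (sref_mem_weylGroup (C.sub hγ)) β, sref_inv]
    group
  rw [hend]
  exact hstep1.trans hstep2

end Ctx

end Chains


section Config

variable {V : Type*} [NormedAddCommGroup V] [InnerProductSpace ℝ V]
variable {Φ Pos : Set V} {f : V →ₗ[ℝ] ℝ}

namespace Ctx

set_option maxHeartbeats 1000000 in
/-- Classification of the possible rank-two configurations of a pair of positive roots
whose sum is a root, in the absence of `G₂` components. -/
private lemma config (C : Ctx Φ Pos f) {β γ : V} (hβ : β ∈ Pos) (hγ : γ ∈ Pos)
    (hadd : β + γ ∈ Φ) :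
    (⟪β, γ⟫ = 0 ∧ ⟪β, β⟫ = ⟪γ, γ⟫) ∨
    (2 * ⟪β, γ⟫ = -⟪γ, γ⟫ ∧ 2 * ⟪β, γ⟫ = -⟪β, β⟫) ∨
    (⟪β, γ⟫ = -⟪β, β⟫ ∧ ⟪γ, γ⟫ = 2 * ⟪β, β⟫) ∨
    (⟪β, γ⟫ = -⟪γ, γ⟫ ∧ ⟪β, β⟫ = 2 * ⟪γ, γ⟫) := by
  have hβΦ : β ∈ Φ := C.sub hβ
  have hγΦ : γ ∈ Φ := C.sub hγ
  have ha : (0:ℝ) < ⟪β, β⟫ := inner_self_pos' (C.rs.ne_zero β hβΦ)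
  have hb : (0:ℝ) < ⟪γ, γ⟫ := inner_self_pos' (C.rs.ne_zero γ hγΦ)
  have hcomm : ⟪γ, β⟫ = ⟪β, γ⟫ := real_inner_comm β γ
  have hneq : β ≠ γ := by
    intro h
    have h2 : (2:ℝ) • γ ∈ Φ := by
      rw [show (2:ℝ) • γ = β + γ by rw [h, two_smul]]
      exact hadd
    rcases C.rs.reduced γ hγΦ 2 h2 with h' | h' <;> norm_num at h'
  have hneq' : β ≠ -γ := by
    intro h
    have h1 := C.fpos hβ
    have h2 := C.fpos hγ
    rw [h, map_neg] at h1
    linarith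
  have hCS : ⟪β, γ⟫ * ⟪β, γ⟫ < ⟪β, β⟫ * ⟪γ, γ⟫ := C.strictCS hβΦ hγΦ hneq hneq'
  obtain ⟨m, hm⟩ := C.rs.crystallographic γ hγΦ β hβΦ
  obtain ⟨k, hk⟩ := C.rs.crystallographic β hβΦ γ hγΦ
  have hmb : (m:ℝ) * ⟪γ, γ⟫ = 2 * ⟪β, γ⟫ := by
    rw [hm]
    field_simp
  have hka : (k:ℝ) * ⟪β, β⟫ = 2 * ⟪β, γ⟫ := by
    rw [hk]
    field_simp
    linarith [hcomm]
  have hmk4 : (m:ℝ) * (k:ℝ) < 4 := by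
    have h4 : ((m:ℝ) * (k:ℝ)) * (⟪γ, γ⟫ * ⟪β, β⟫) = 4 * (⟪β, γ⟫ * ⟪β, γ⟫) := by
      calc ((m:ℝ) * (k:ℝ)) * (⟪γ, γ⟫ * ⟪β, β⟫)
          = ((m:ℝ) * ⟪γ, γ⟫) * ((k:ℝ) * ⟪β, β⟫) := by ring
        _ = (2 * ⟪β, γ⟫) * (2 * ⟪β, γ⟫) := by rw [hmb, hka]
        _ = 4 * (⟪β, γ⟫ * ⟪β, γ⟫) := by ring
    nlinarith
  have hmk4' : m * k < 4 := by exact_mod_cast hmk4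
  have hmk3 : m * k ≠ 3 := by
    intro h
    apply C.g2 β hβΦ γ hγΦ
    rw [← hm, show 2 * ⟪γ, β⟫ / ⟪β, β⟫ = (k:ℝ) by rw [hk]]
    exact_mod_cast congrArg (Int.cast : ℤ → ℝ) h
  have hmk2 : m * k ≤ 2 := by
    have h1 : m * k ≤ 3 := by linarith
    rcases lt_or_eq_of_le h1 with h' | h'
    · linarith
    · exact absurd h' hmk3
  obtain ⟨r1, hr1⟩ := C.rs.crystallographic (β + γ) hadd γ hγΦ
  obtain ⟨r2, hr2⟩ := C.rs.crystallographic (β + γ) hadd β hβΦ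
  have hαα : ⟪β + γ, β + γ⟫ = ⟪β, β⟫ + 2 * ⟪β, γ⟫ + ⟪γ, γ⟫ := by
    simp only [inner_add_left, inner_add_right]
    linarith [hcomm]
  have hαα0 : (0:ℝ) < ⟪β, β⟫ + 2 * ⟪β, γ⟫ + ⟪γ, γ⟫ := by
    rw [← hαα]
    exact inner_self_pos' (C.rs.ne_zero _ hadd)
  have hγα : ⟪γ, β + γ⟫ = ⟪β, γ⟫ + ⟪γ, γ⟫ := by
    rw [inner_add_right]
    linarith [hcomm]
  have hβα : ⟪β, β + γ⟫ = ⟪β, β⟫ + ⟪β, γ⟫ := by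
    rw [inner_add_right]
  have hr1' : (r1:ℝ) * (⟪β, β⟫ + 2 * ⟪β, γ⟫ + ⟪γ, γ⟫) = 2 * (⟪β, γ⟫ + ⟪γ, γ⟫) := by
    rw [hr1, hαα, hγα]
    field_simp
  have hr2' : (r2:ℝ) * (⟪β, β⟫ + 2 * ⟪β, γ⟫ + ⟪γ, γ⟫) = 2 * (⟪β, β⟫ + ⟪β, γ⟫) := by
    rw [hr2, hαα, hβα]
    field_simp
  rcases lt_trichotomy ⟪β, γ⟫ 0 with hc | hc | hc
  · -- c < 0 : the three genuine cases
    have hm1 : m ≤ -1 := by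
      have : (m:ℝ) < 0 := by nlinarith
      have : m < 0 := by exact_mod_cast this
      omega
    have hk1 : k ≤ -1 := by
      have : (k:ℝ) < 0 := by nlinarith
      have : k < 0 := by exact_mod_cast this
      omega
    have hm2 : -2 ≤ m := by
      by_contra hcon
      push_neg at hcon
      have h1 : (0:ℤ) ≤ (-m - 3) * (-k - 1) := by
        apply mul_nonneg <;> omega
      nlinarith
    have hk2 : -2 ≤ k := by
      by_contra hcon
      push_neg at hcon
      have h1 : (0:ℤ) ≤ (-k - 3) * (-m - 1) := by
        apply mul_nonneg <;> omega
      nlinarith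
    interval_cases m <;> interval_cases k
    · -- (-2, -2) impossible
      norm_num at hmk2
    · -- (-2, -1) : case (iv)
      refine Or.inr (Or.inr (Or.inr ⟨?_, ?_⟩))
      · push_cast at hmb
        linarith
      · push_cast at hmb hka
        linarith
    · -- (-1, -2) : case (iii)
      refine Or.inr (Or.inr (Or.inl ⟨?_, ?_⟩))
      · push_cast at hka
        linarith
      · push_cast at hmb hka
        linarith
    · -- (-1, -1) : case (ii)
      refine Or.inr (Or.inl ⟨?_, ?_⟩)
      · push_cast at hmb
        linarith
      · push_cast at hka
        linarith
  · -- c = 0 : case (i)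
    have hr1a : (r1:ℝ) * (⟪β, β⟫ + ⟪γ, γ⟫) = 2 * ⟪γ, γ⟫ := by
      rw [hc] at hr1'
      linarith
    have hab : (0:ℝ) < ⟪β, β⟫ + ⟪γ, γ⟫ := by linarith
    have hr1pos : (0:ℝ) < (r1:ℝ) := by
      by_contra hcon
      push_neg at hcon
      nlinarith [hr1a, hab, hb, mul_nonpos_of_nonpos_of_nonneg hcon (le_of_lt hab)]
    have hr1lt : (r1:ℝ) < 2 := by
      by_contra hcon
      push_neg at hcon
      nlinarith [hr1a, hab, ha, hb, mul_le_mul_of_nonneg_right hcon (le_of_lt hab)]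
    have h1 : r1 = 1 := by
      have h1 : (0:ℤ) < r1 := by exact_mod_cast hr1pos
      have h2 : r1 < 2 := by exact_mod_cast hr1lt
      omega
    rw [h1] at hr1a
    push_cast at hr1a
    exact Or.inl ⟨hc, by linarith⟩
  · -- c > 0 : impossible
    exfalso
    have hm1 : 1 ≤ m := by
      have : (0:ℝ) < (m:ℝ) := by nlinarith
      have : 0 < m := by exact_mod_cast this
      omega
    have hk1 : 1 ≤ k := by
      have : (0:ℝ) < (k:ℝ) := by nlinarith
      have : 0 < k := by exact_mod_cast this
      omega
    have hm2 : m ≤ 2 := by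
      by_contra hcon
      push_neg at hcon
      have h1 : (0:ℤ) ≤ (m - 3) * (k - 1) := by
        apply mul_nonneg <;> omega
      nlinarith
    have hk2 : k ≤ 2 := by
      by_contra hcon
      push_neg at hcon
      have h1 : (0:ℤ) ≤ (k - 3) * (m - 1) := by
        apply mul_nonneg <;> omega
      nlinarith
    interval_cases m <;> interval_cases k
    · -- (1,1) : G₂ pair (β+γ, β)
      push_cast at hmb hka
      apply C.g2 (β + γ) hadd β hβΦ
      rw [hαα, hβα]
      have e1 : ⟪β, β⟫ = 2 * ⟪β, γ⟫ := by linarith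
      have e2 : ⟪γ, γ⟫ = 2 * ⟪β, γ⟫ := by linarith
      rw [show ⟪β + γ, β⟫ = ⟪β, β⟫ + ⟪β, γ⟫ by
        rw [inner_add_left]; linarith [hcomm]]
      rw [e1, e2]
      have : ⟪β, γ⟫ ≠ 0 := by linarith
      field_simp
      ring
    · -- (1,2) : not crystallographic
      push_cast at hmb hka
      have e1 : ⟪γ, γ⟫ = 2 * ⟪β, γ⟫ := by linarith
      have e2 : ⟪β, β⟫ = ⟪β, γ⟫ := by linarith
      have h5 : (r1:ℝ) * (5 * ⟪β, γ⟫) = 6 * ⟪β, γ⟫ := by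
        rw [e1, e2] at hr1'
        linarith
      have h6 : (5 * (r1:ℝ)) = 6 := by
        have hc0 : ⟪β, γ⟫ ≠ 0 := by linarith
        have h7 : (5 * (r1:ℝ)) * ⟪β, γ⟫ = 6 * ⟪β, γ⟫ := by linear_combination h5
        exact mul_right_cancel₀ hc0 h7
      have : (5 * r1 : ℤ) = 6 := by exact_mod_cast h6
      omega
    · -- (2,1) : not crystallographic
      push_cast at hmb hka
      have e1 : ⟪γ, γ⟫ = ⟪β, γ⟫ := by linarith
      have e2 : ⟪β, β⟫ = 2 * ⟪β, γ⟫ := by linarith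
      have h5 : (r2:ℝ) * (5 * ⟪β, γ⟫) = 6 * ⟪β, γ⟫ := by
        rw [e1, e2] at hr2'
        linarith
      have h6 : (5 * (r2:ℝ)) = 6 := by
        have hc0 : ⟪β, γ⟫ ≠ 0 := by linarith
        have h7 : (5 * (r2:ℝ)) * ⟪β, γ⟫ = 6 * ⟪β, γ⟫ := by linear_combination h5
        exact mul_right_cancel₀ hc0 h7
      have : (5 * r2 : ℤ) = 6 := by exact_mod_cast h6
      omega
    · -- (2,2) impossible
      norm_num at hmk2

end Ctx

end Config

theorem closed_under_subtraction_iff_convexHull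
    {V : Type*} [NormedAddCommGroup V] [InnerProductSpace ℝ V] [FiniteDimensional ℝ V]
    {Φ Pos : Set V} (hΦ : IsReducedCrystallographicRootSystem Φ)
    (hPos : IsPositiveSystem Φ Pos) (hG2 : HasNoG2Component Φ)
    (w : weylGroup Φ) (hpal : PoincarePalindromic Pos w) :
    (∀ α ∈ ESet Pos w, ∀ β ∈ Pos, α - β ∈ Pos → α - β ∈ ESet Pos w)
      ↔ Pos ∩ convexHull ℝ (ESet Pos w) ⊆ ESet Pos w := by
  obtain ⟨hPsub, f, hf, hPdef⟩ := hPos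
  have hPmem : ∀ {x : V}, x ∈ Pos ↔ x ∈ Φ ∧ 0 < f x := by
    intro x; rw [hPdef]; exact Iff.rfl
  constructor
  · intro hclosed γ hγ
    obtain ⟨hγPos, hγhull⟩ := hγ
    have hγΦ : γ ∈ Φ := hPsub hγPos
    rw [convexHull_eq] at hγhull
    obtain ⟨ι, s, c, z, hc0, hc1, hzE, hcm⟩ := hγhull
    rw [Finset.centerMass_eq_of_sum_1 _ _ hc1] at hcm
    by_cases hex : ∃ i ∈ s, z i = γ
    · obtain ⟨i, hi, hzi⟩ := hex
      exact hzi ▸ hzE i hi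
    push_neg at hex
    by_cases hex2 : ∃ i ∈ s, z i - γ ∈ Pos
    · obtain ⟨i, hi, hzi⟩ := hex2
      have h := hclosed (z i) (hzE i hi) (z i - γ) hzi
        (by rw [sub_sub_cancel]; exact hγPos)
      rwa [sub_sub_cancel] at h
    push_neg at hex2
    exfalso
    have hzPos : ∀ i ∈ s, z i ∈ Pos := fun i hi => (hzE i hi).1
    have hzΦ : ∀ i ∈ s, z i ∈ Φ := fun i hi => hPsub (hzPos i hi)
    have hb : ∀ i ∈ s, ⟪γ, z i⟫ ≤ ⟪γ, γ⟫ ∧ (⟪γ, z i⟫ = ⟪γ, γ⟫ → γ - z i ∈ Φ) := by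
      intro i hi
      refine root_pair_bound hΦ hG2 hγΦ (hzΦ i hi) (hex i hi) ?_
      intro h
      have h1 : 0 < f (z i) := (hPmem.mp (hzPos i hi)).2
      rw [h, map_neg] at h1
      have h2 : 0 < f γ := (hPmem.mp hγPos).2
      linarith
    have hsum : ∑ i ∈ s, c i * ⟪γ, z i⟫ = ⟪γ, γ⟫ := by
      have haux : ⟪γ, ∑ i ∈ s, c i • z i⟫ = ∑ i ∈ s, c i * ⟪γ, z i⟫ := by
        rw [inner_sum]
        simp_rw [real_inner_smul_right]
      rw [← haux, hcm]
    have h0 : ∑ i ∈ s, c i * (⟪γ, γ⟫ - ⟪γ, z i⟫) = 0 := by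
      simp only [mul_sub, Finset.sum_sub_distrib, ← Finset.sum_mul, hc1, one_mul, hsum,
        sub_self]
    have hinner_eq : ∀ i ∈ s, 0 < c i → ⟪γ, z i⟫ = ⟪γ, γ⟫ := by
      intro i hi hci
      have hterm := (Finset.sum_eq_zero_iff_of_nonneg ?_).mp h0 i hi
      · have := mul_eq_zero.mp hterm
        rcases this with h | h
        · exact absurd h (ne_of_gt hci)
        · linarith [sub_eq_zero.mp h]
      · intro j hj
        exact mul_nonneg (hc0 j hj) (sub_nonneg.mpr (hb j hj).1)
    have hflt : ∀ i ∈ s, 0 < c i → f (z i) < f γ := by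
      intro i hi hci
      have hroot : γ - z i ∈ Φ := (hb i hi).2 (hinner_eq i hi hci)
      have hzγ : z i - γ ∈ Φ := by
        have := rcrs_neg_mem hΦ hroot
        rwa [neg_sub] at this
      have hnot : ¬ 0 < f (z i - γ) := fun h => hex2 i hi (hPmem.mpr ⟨hzγ, h⟩)
      have hne0 : f (z i - γ) ≠ 0 := hf _ hzγ
      have hlt0 : f (z i - γ) < 0 := lt_of_le_of_ne (not_lt.mp hnot) hne0
      rw [map_sub] at hlt0
      linarith
    have hfsum : f γ = ∑ i ∈ s, c i * f (z i) := by
      conv_lhs => rw [← hcm]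
      rw [map_sum]
      simp_rw [map_smul, smul_eq_mul]
    have hlt : ∑ i ∈ s, c i * f (z i) < ∑ i ∈ s, c i * f γ := by
      apply Finset.sum_lt_sum
      · intro i hi
        rcases eq_or_lt_of_le (hc0 i hi) with h | h
        · rw [← h]; simp
        · exact mul_le_mul_of_nonneg_left (le_of_lt (hflt i hi h)) (le_of_lt h)
      · have hexi : ∃ i ∈ s, 0 < c i := by
          by_contra hno
          push_neg at hno
          have hz : ∑ i ∈ s, c i = 0 :=
            Finset.sum_eq_zero fun i hi => le_antisymm (hno i hi) (hc0 i hi)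
          rw [hc1] at hz
          norm_num at hz
        obtain ⟨i, hi, hci⟩ := hexi
        exact ⟨i, hi, mul_lt_mul_of_pos_left (hflt i hi hci) hci⟩
    rw [← Finset.sum_mul, hc1, one_mul, ← hfsum] at hlt
    exact lt_irrefl _ hlt
  · intro hconv α hα β hβ hαβ
    have C : Ctx Φ Pos f := ⟨hΦ, hG2, hPsub, hf, hPdef⟩
    obtain ⟨hαPos, t, ⟨hαΦ', ht⟩, htw⟩ := hα
    have hαE : α ∈ ESet Pos w := ⟨hαPos, t, ⟨hαΦ', ht⟩, htw⟩
    have hαΦ : α ∈ Φ := hPsub hαPos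
    obtain ⟨γ, hγdef⟩ : ∃ γ, γ = α - β := ⟨_, rfl⟩
    rw [← hγdef] at hαβ ⊢
    have hγPos : γ ∈ Pos := hαβ
    have hγΦ : γ ∈ Φ := hPsub hγPos
    have hβΦ : β ∈ Φ := hPsub hβ
    have hsum : β + γ = α := by rw [hγdef]; abel
    have hadd : β + γ ∈ Φ := by rw [hsum]; exact hαΦ
    have haa : (0:ℝ) < ⟪β, β⟫ := inner_self_pos' (hΦ.ne_zero β hβΦ)
    have hbb : (0:ℝ) < ⟪γ, γ⟫ := inner_self_pos' (hΦ.ne_zero γ hγΦ)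
    have hcomm : ⟪γ, β⟫ = ⟪β, γ⟫ := real_inner_comm β γ
    -- identify `t` with the reflection in `α`
    have htsW : t = sW hαΦ := by
      apply Subtype.ext
      apply LinearEquiv.ext
      intro v
      rw [ht v]
      rfl
    have hW : bruhatLE Pos (sW hαΦ) w := htsW ▸ htw
    have hEmem : ∀ {δ : V} (hδ : δ ∈ Pos),
        bruhatLE Pos (sW (C.sub hδ)) (sW hαΦ) → δ ∈ ESet Pos w := by
      intro δ hδ hch
      exact ⟨hδ, sW (C.sub hδ), ⟨C.sub hδ, fun _ => rfl⟩, hch.trans hW⟩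
    rcases C.config hβ hγPos hadd with ⟨hc, hab⟩ | ⟨h1, h2⟩ | ⟨h1, h2⟩ | ⟨h1, h2⟩
    · -- orthogonal case : `⟪β,γ⟫ = 0`, `⟪β,β⟫ = ⟪γ,γ⟫`
      have eθ : sref γ α = β - γ := by
        rw [sref_apply, show 2 * ⟪α, γ⟫ / ⟪γ, γ⟫ = (2:ℝ) by
          rw [div_eq_iff (ne_of_gt hbb), ← hsum, inner_add_left]
          linarith]
        rw [← hsum]
        module
      have hθΦ : β - γ ∈ Φ := by
        rw [← eθ, sref_apply]
        exact hΦ.reflection_mem γ hγΦ α hαΦ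
      by_cases hθP : β - γ ∈ Pos
      · -- use the chain `s_γ → s_θ s_γ → s_γ s_θ s_γ = s_α`
        have e1 : sref γ (β - γ) = α := by
          rw [sref_apply, show 2 * ⟪β - γ, γ⟫ / ⟪γ, γ⟫ = (-2:ℝ) by
            rw [div_eq_iff (ne_of_gt hbb), inner_sub_left]
            linarith]
          rw [← hsum]
          module
        have h1Pos : sref γ (β - γ) ∈ Pos := by rw [e1]; exact hαPos
        have e2 : sref (β - γ) γ = β := by
          rw [sref_apply, show 2 * ⟪γ, β - γ⟫ / ⟪β - γ, β - γ⟫ = (-1:ℝ) by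
            rw [div_eq_iff (ne_of_gt (inner_self_pos' (hΦ.ne_zero _ hθΦ)))]
            simp only [inner_sub_left, inner_sub_right]
            linarith]
          module
        have e3 : sref γ (sref (β - γ) γ) = β := by
          rw [e2, sref_apply, show 2 * ⟪β, γ⟫ / ⟪γ, γ⟫ = (0:ℝ) by
            rw [div_eq_iff (ne_of_gt hbb)]
            linarith]
          rw [zero_smul, sub_zero]
        have h2Pos : sref γ (sref (β - γ) γ) ∈ Pos := by rw [e3]; exact hβ
        have he : sref γ (β - γ) ∈ Φ := by rw [e1]; exact hαΦ
        have hchain := C.chainT2 hγPos hθP h1Pos h2Pos he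
        have hee : sW he = sW hαΦ := Subtype.ext (congrArg sref e1)
        exact hEmem hγPos (hee ▸ hchain)
      · -- `γ - β` is positive: get `s_{γ-β} ≤ s_α` and use convexity
        have hθ'P : γ - β ∈ Pos := by
          have := C.neg_mem_pos hθΦ hθP
          rwa [neg_sub] at this
        have hθ'Φ : γ - β ∈ Φ := hPsub hθ'P
        have hθθ : (0:ℝ) < ⟪γ - β, γ - β⟫ := inner_self_pos' (hΦ.ne_zero _ hθ'Φ)
        have e1 : sref (γ - β) β = γ := by
          rw [sref_apply, show 2 * ⟪β, γ - β⟫ / ⟪γ - β, γ - β⟫ = (-1:ℝ) by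
            rw [div_eq_iff (ne_of_gt hθθ)]
            simp only [inner_sub_left, inner_sub_right]
            linarith]
          module
        have h1Pos : sref (γ - β) β ∈ Pos := by rw [e1]; exact hγPos
        have e2 : sref β (sref (γ - β) β) = γ := by
          rw [e1, sref_apply, show 2 * ⟪γ, β⟫ / ⟪β, β⟫ = (0:ℝ) by
            rw [div_eq_iff (ne_of_gt haa)]
            linarith]
          rw [zero_smul, sub_zero]
        have h2Pos : sref β (sref (γ - β) β) ∈ Pos := by rw [e2]; exact hγPos
        have he : sref β (γ - β) ∈ Φ := by
          rw [sref_apply]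
          exact hΦ.reflection_mem β hβΦ _ hθ'Φ
        have eend : sref β (γ - β) = α := by
          rw [sref_apply, show 2 * ⟪γ - β, β⟫ / ⟪β, β⟫ = (-2:ℝ) by
            rw [div_eq_iff (ne_of_gt haa), inner_sub_left]
            linarith]
          rw [← hsum]
          module
        have hchain := C.chainT1 hθ'P hβ h1Pos h2Pos he
        have hee : sW he = sW hαΦ := Subtype.ext (congrArg sref eend)
        have hθ'E : γ - β ∈ ESet Pos w := hEmem hθ'P (hee ▸ hchain)
        -- `γ = ½ α + ½ (γ - β)` lies in the convex hull of `E(w)`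
        have hseg : γ ∈ segment ℝ α (γ - β) := by
          refine ⟨1/2, 1/2, by norm_num, by norm_num, by norm_num, ?_⟩
          rw [← hsum]
          module
        exact hconv ⟨hγPos, segment_subset_convexHull hαE hθ'E hseg⟩
    · -- the `A₂` case : `2⟪β,γ⟫ = -⟪γ,γ⟫ = -⟪β,β⟫`
      have e1 : sref γ β = α := by
        rw [sref_apply, show 2 * ⟪β, γ⟫ / ⟪γ, γ⟫ = (-1:ℝ) by
          rw [div_eq_iff (ne_of_gt hbb)]
          linarith]
        rw [← hsum]
        module
      have h1Pos : sref γ β ∈ Pos := by rw [e1]; exact hαPos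
      have e2 : sref β (sref γ β) = γ := by
        rw [e1, sref_apply, show 2 * ⟪α, β⟫ / ⟪β, β⟫ = (1:ℝ) by
          rw [div_eq_iff (ne_of_gt haa), ← hsum, inner_add_left]
          linarith]
        rw [one_smul, ← hsum]
        abel
      have h2Pos : sref β (sref γ β) ∈ Pos := by rw [e2]; exact hγPos
      have he : sref β γ ∈ Φ := by
        rw [sref_apply]
        exact hΦ.reflection_mem β hβΦ γ hγΦ
      have eend : sref β γ = α := by
        rw [sref_apply, show 2 * ⟪γ, β⟫ / ⟪β, β⟫ = (-1:ℝ) by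
          rw [div_eq_iff (ne_of_gt haa)]
          linarith]
        rw [← hsum]
        module
      have hchain := C.chainT1 hγPos hβ h1Pos h2Pos he
      have hee : sW he = sW hαΦ := Subtype.ext (congrArg sref eend)
      exact hEmem hγPos (hee ▸ hchain)
    · -- `γ` long : `⟪β,γ⟫ = -⟪β,β⟫`, `⟪γ,γ⟫ = 2⟪β,β⟫`
      have e1 : sref γ β = α := by
        rw [sref_apply, show 2 * ⟪β, γ⟫ / ⟪γ, γ⟫ = (-1:ℝ) by
          rw [div_eq_iff (ne_of_gt hbb)]
          linarith]
        rw [← hsum]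
        module
      have h1Pos : sref γ β ∈ Pos := by rw [e1]; exact hαPos
      have eβγ : sref β γ = γ + (2:ℝ) • β := by
        rw [sref_apply, show 2 * ⟪γ, β⟫ / ⟪β, β⟫ = (-2:ℝ) by
          rw [div_eq_iff (ne_of_gt haa)]
          linarith]
        module
      have he2 : γ + (2:ℝ) • β ∈ Φ := by
        rw [← eβγ, sref_apply]
        exact hΦ.reflection_mem β hβΦ γ hγΦ
      have e2 : sref γ (sref β γ) = γ + (2:ℝ) • β := by
        rw [eβγ, sref_apply, show 2 * ⟪γ + (2:ℝ) • β, γ⟫ / ⟪γ, γ⟫ = (0:ℝ) by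
          rw [div_eq_iff (ne_of_gt hbb), inner_add_left, real_inner_smul_left]
          linarith]
        rw [zero_smul, sub_zero]
      have h2Pos : sref γ (sref β γ) ∈ Pos := by
        rw [e2]
        refine C.memPos.mpr ⟨he2, ?_⟩
        rw [map_add, map_smul, smul_eq_mul]
        have hfβ := C.fpos hβ
        have hfγ := C.fpos hγPos
        linarith
      have he : sref γ β ∈ Φ := by
        rw [sref_apply]
        exact hΦ.reflection_mem γ hγΦ β hβΦ
      have hchain := C.chainT2 hγPos hβ h1Pos h2Pos he
      have hee : sW he = sW hαΦ := Subtype.ext (congrArg sref e1)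
      exact hEmem hγPos (hee ▸ hchain)
    · -- `β` long : `⟪β,γ⟫ = -⟪γ,γ⟫`, `⟪β,β⟫ = 2⟪γ,γ⟫`
      have e1 : sref γ β = β + (2:ℝ) • γ := by
        rw [sref_apply, show 2 * ⟪β, γ⟫ / ⟪γ, γ⟫ = (-2:ℝ) by
          rw [div_eq_iff (ne_of_gt hbb)]
          linarith]
        module
      have he1 : β + (2:ℝ) • γ ∈ Φ := by
        rw [← e1, sref_apply]
        exact hΦ.reflection_mem γ hγΦ β hβΦ
      have h1Pos : sref γ β ∈ Pos := by
        rw [e1]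
        refine C.memPos.mpr ⟨he1, ?_⟩
        rw [map_add, map_smul, smul_eq_mul]
        have hfβ := C.fpos hβ
        have hfγ := C.fpos hγPos
        linarith
      have e2 : sref β (sref γ β) = β + (2:ℝ) • γ := by
        rw [e1, sref_apply, show 2 * ⟪β + (2:ℝ) • γ, β⟫ / ⟪β, β⟫ = (0:ℝ) by
          rw [div_eq_iff (ne_of_gt haa), inner_add_left, real_inner_smul_left]
          linarith]
        rw [zero_smul, sub_zero]
      have h2Pos : sref β (sref γ β) ∈ Pos := by
        rw [e2, ← e1]
        exact h1Pos
      have he : sref β γ ∈ Φ := by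
        rw [sref_apply]
        exact hΦ.reflection_mem β hβΦ γ hγΦ
      have eend : sref β γ = α := by
        rw [sref_apply, show 2 * ⟪γ, β⟫ / ⟪β, β⟫ = (-1:ℝ) by
          rw [div_eq_iff (ne_of_gt haa)]
          linarith]
        rw [← hsum]
        module
      have hchain := C.chainT1 hγPos hβ h1Pos h2Pos he
      have hee : sW he = sW hαΦ := Subtype.ext (congrArg sref eend)
      exact hEmem hγPos (hee ▸ hchain)
end
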